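/- arXiv:1309.0680 — 4 statements merged into one kernel-verified Lean document; each statement's English description precedes it below -/
import Mathlib

section
/- A graph G is the line graph of some bipartite graph if and only if G contains no odd hole (induced odd cycle of length at least 5), no induced claw K_{1,3}, and no induced diamond (K_4 minus an edge). -/
open SimpleGraph

universe u

namespace BSP

variable {V : Type*}

/-- A walk is induced: any two adjacent vertices of its support are consecutive on it. -/
def IsInducedWalk (G : SimpleGraph V) {u v : V} (p : G.Walk u v) : Prop :=
  ∀ x ∈ p.support, ∀ y ∈ p.support, G.Adj x y → s(x, y) ∈ p.edges

/-- An induced path. -/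
def IsInducedPath (G : SimpleGraph V) {u v : V} (p : G.Walk u v) : Prop :=
  p.IsPath ∧ IsInducedWalk G p

/-- An induced cycle. -/
def IsInducedCycle (G : SimpleGraph V) {u : V} (p : G.Walk u u) : Prop :=
  p.IsCycle ∧ IsInducedWalk G p

/-- `G` has an odd hole: an induced odd cycle of length at least 5. -/
def HasOddHole (G : SimpleGraph V) : Prop :=
  ∃ (u : V) (p : G.Walk u u), IsInducedCycle G p ∧ Odd p.length ∧ 5 ≤ p.length

/-- A graph is Berge if neither it nor its complement has an odd hole. -/
def Berge (G : SimpleGraph V) : Prop := ¬ HasOddHole G ∧ ¬ HasOddHole Gᶜ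

/-- `x` is an interior vertex of the walk `p`. -/
def Interior {G : SimpleGraph V} {u v : V} (p : G.Walk u v) (x : V) : Prop :=
  x ∈ p.support ∧ x ≠ u ∧ x ≠ v

/-- A skew partition `(A, B)` of `G`. -/
def IsSkewPartition (G : SimpleGraph V) (A B : Set V) : Prop :=
  A.Nonempty ∧ B.Nonempty ∧ Disjoint A B ∧ A ∪ B = Set.univ ∧
  ¬ (G.induce A).Connected ∧ ¬ ((Gᶜ).induce B).Connected

/-- A balanced skew partition. -/
def IsBalancedSkewPartition (G : SimpleGraph V) (A B : Set V) : Prop :=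
  IsSkewPartition G A B ∧
  (∀ (x y : V) (p : G.Walk x y), IsInducedPath G p → 2 ≤ p.length →
     x ∈ B → y ∈ B → (∀ z, Interior p z → z ∈ A) → Even p.length) ∧
  (∀ (x y : V) (q : (Gᶜ).Walk x y), IsInducedPath Gᶜ q → 2 ≤ q.length →
     x ∈ A → y ∈ A → (∀ z, Interior q z → z ∈ B) → Even q.length)

def HasBalancedSkewPartition (G : SimpleGraph V) : Prop :=
  ∃ A B : Set V, IsBalancedSkewPartition G A B

def IsSkewCutset (G : SimpleGraph V) (B : Set V) : Prop :=
  IsSkewPartition G Bᶜ B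

def IsBalancedSkewCutset (G : SimpleGraph V) (B : Set V) : Prop :=
  IsBalancedSkewPartition G Bᶜ B

/-- `C` is a cutset of `G`. -/
def IsCutset (G : SimpleGraph V) (C : Set V) : Prop :=
  ¬ (G.induce (Cᶜ : Set V)).Connected

/-- A star: a set with a vertex adjacent to all the others in it. -/
def IsStar (G : SimpleGraph V) (B : Set V) : Prop :=
  ∃ x ∈ B, ∀ y ∈ B, y ≠ x → G.Adj x y

def HasStarCutset (G : SimpleGraph V) : Prop :=
  ∃ B : Set V, IsStar G B ∧ IsCutset G B

/-- A 2-join of `G` with split `(X1, X2, A1, B1, A2, B2)`. -/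
def IsTwoJoinSplit (G : SimpleGraph V) (X1 X2 A1 B1 A2 B2 : Set V) : Prop :=
  Disjoint X1 X2 ∧ X1 ∪ X2 = Set.univ ∧
  A1 ⊆ X1 ∧ B1 ⊆ X1 ∧ A2 ⊆ X2 ∧ B2 ⊆ X2 ∧
  Disjoint A1 B1 ∧ Disjoint A2 B2 ∧
  A1.Nonempty ∧ B1.Nonempty ∧ A2.Nonempty ∧ B2.Nonempty ∧
  (∀ a1 ∈ A1, ∀ a2 ∈ A2, G.Adj a1 a2) ∧
  (∀ b1 ∈ B1, ∀ b2 ∈ B2, G.Adj b1 b2) ∧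
  (∀ x ∈ X1, ∀ y ∈ X2, G.Adj x y → (x ∈ A1 ∧ y ∈ A2) ∨ (x ∈ B1 ∧ y ∈ B2))

/-- Reachability inside a set of vertices. -/
def ReachIn (G : SimpleGraph V) (S : Set V) (u v : V) : Prop :=
  ∃ p : G.Walk u v, ∀ x ∈ p.support, x ∈ S

/-- Every component of `G[X]` meets both `A` and `B`. -/
def SideConnected (G : SimpleGraph V) (X A B : Set V) : Prop :=
  ∀ v ∈ X, (∃ a ∈ A, ReachIn G X v a) ∧ (∃ b ∈ B, ReachIn G X v b)

def IsConnectedTwoJoin (G : SimpleGraph V) (X1 X2 A1 B1 A2 B2 : Set V) : Prop :=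
  IsTwoJoinSplit G X1 X2 A1 B1 A2 B2 ∧
  SideConnected G X1 A1 B1 ∧ SideConnected G X2 A2 B2

/-- `X` has at least 3 vertices and is not a path of length 2 from `A` to `B`
with interior in `X \ (A ∪ B)`. -/
def SideSubstantial (G : SimpleGraph V) (X A B : Set V) : Prop :=
  3 ≤ X.ncard ∧
  ¬ ∃ a ∈ A, ∃ b ∈ B, ∃ c ∈ X \ (A ∪ B),
      X = {a, c, b} ∧ G.Adj a c ∧ G.Adj c b ∧ ¬ G.Adj a b

def IsSubstantialTwoJoin (G : SimpleGraph V) (X1 X2 A1 B1 A2 B2 : Set V) : Prop :=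
  IsTwoJoinSplit G X1 X2 A1 B1 A2 B2 ∧
  SideSubstantial G X1 A1 B1 ∧ SideSubstantial G X2 A2 B2

def IsProperTwoJoin (G : SimpleGraph V) (X1 X2 A1 B1 A2 B2 : Set V) : Prop :=
  IsConnectedTwoJoin G X1 X2 A1 B1 A2 B2 ∧
  SideSubstantial G X1 A1 B1 ∧ SideSubstantial G X2 A2 B2

/-- A degenerate 2-join. -/
def IsDegenerate (G : SimpleGraph V) (X1 X2 A1 B1 A2 B2 : Set V) : Prop :=
  (∃ v ∈ A1, ∀ w ∈ X1 \ A1, ¬ G.Adj v w) ∨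
  (∃ v ∈ B1, ∀ w ∈ X1 \ B1, ¬ G.Adj v w) ∨
  (∃ v ∈ A2, ∀ w ∈ X2 \ A2, ¬ G.Adj v w) ∨
  (∃ v ∈ B2, ∀ w ∈ X2 \ B2, ¬ G.Adj v w) ∨
  IsSkewCutset G (A1 ∪ A2) ∨ IsSkewCutset G (B1 ∪ B2) ∨
  ¬ (SideConnected G X1 A1 B1 ∧ SideConnected G X2 A2 B2) ∨
  (∃ v ∈ A1, ∀ w ∈ B1, G.Adj v w) ∨ (∃ v ∈ B1, ∀ w ∈ A1, G.Adj v w) ∨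
  (∃ v ∈ A2, ∀ w ∈ B2, G.Adj v w) ∨ (∃ v ∈ B2, ∀ w ∈ A2, G.Adj v w) ∨
  (∃ v ∈ X1 \ (A1 ∪ B1), ∀ w ∈ A1 ∪ B1, G.Adj v w) ∨
  (∃ v ∈ X2 \ (A2 ∪ B2), ∀ w ∈ A2 ∪ B2, G.Adj v w)

/-- An induced path from `A` to `B` with no interior vertex in `A ∪ B`. -/
def CrossPath (G : SimpleGraph V) (A B : Set V) {u v : V} (p : G.Walk u v) : Prop :=
  IsInducedPath G p ∧ u ∈ A ∧ v ∈ B ∧ ∀ x, Interior p x → x ∉ A ∪ B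

/-- An induced path of length at least 2 with both ends in `S` and no interior vertex in `S`. -/
def OutgoingPath (G : SimpleGraph V) (S : Set V) {u v : V} (p : G.Walk u v) : Prop :=
  IsInducedPath G p ∧ 2 ≤ p.length ∧ u ∈ S ∧ v ∈ S ∧ ∀ x, Interior p x → x ∉ S

def claw : SimpleGraph (Fin 1 ⊕ Fin 3) := completeBipartiteGraph (Fin 1) (Fin 3)

def diamond : SimpleGraph (Fin 4) := (⊤ : SimpleGraph (Fin 4)).deleteEdges {s(0, 1)}

def ClawFree (G : SimpleGraph V) : Prop := IsEmpty (claw ↪g G)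

def DiamondFree (G : SimpleGraph V) : Prop := IsEmpty (diamond ↪g G)

def IsLineGraphOfBipartite {V : Type u} (G : SimpleGraph V) : Prop :=
  ∃ (W : Type u) (H : SimpleGraph W), H.Colorable 2 ∧ Nonempty (G ≃g H.lineGraph)

/-- Double split graph structure. -/
structure IsDoubleSplit (G : SimpleGraph V) (m n : ℕ)
    (a b : Fin m → V) (c d : Fin n → V) : Prop where
  hm : 2 ≤ m
  hn : 2 ≤ n
  inj : Function.Injective (Sum.elim (Sum.elim a b) (Sum.elim c d))
  cover : Set.range a ∪ Set.range b ∪ Set.range c ∪ Set.range d = Set.univ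
  hab : ∀ i, G.Adj (a i) (b i)
  habne : ∀ i i', i ≠ i' →
    ¬ G.Adj (a i) (a i') ∧ ¬ G.Adj (a i) (b i') ∧ ¬ G.Adj (b i) (b i')
  hcd : ∀ j, ¬ G.Adj (c j) (d j)
  hcdall : ∀ j j', j ≠ j' →
    G.Adj (c j) (c j') ∧ G.Adj (c j) (d j') ∧ G.Adj (d j) (d j')
  cross : ∀ i j,
    (G.Adj (a i) (c j) ∧ G.Adj (b i) (d j) ∧ ¬ G.Adj (a i) (d j) ∧ ¬ G.Adj (b i) (c j)) ∨
    (G.Adj (a i) (d j) ∧ G.Adj (b i) (c j) ∧ ¬ G.Adj (a i) (c j) ∧ ¬ G.Adj (b i) (d j))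

/-- Path-double split graph structure. -/
structure IsPathDoubleSplit (G : SimpleGraph V) (m n : ℕ)
    (a b : Fin m → V) (c d : Fin n → V) (E : Set V) : Prop where
  hm : 2 ≤ m
  hn : 2 ≤ n
  inj : Function.Injective (Sum.elim (Sum.elim a b) (Sum.elim c d))
  notinE : ∀ i, a i ∉ E ∧ b i ∉ E
  notinE' : ∀ j, c j ∉ E ∧ d j ∉ E
  cover : Set.range a ∪ Set.range b ∪ Set.range c ∪ Set.range d ∪ E = Set.univ
  hE : ∀ v ∈ E, (G.neighborSet v).ncard = 2 ∧
    ∃ (i : Fin m) (p : G.Walk (a i) (b i)), IsInducedPath G p ∧ Odd p.length ∧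
      (∀ x, Interior p x → x ∈ E) ∧ v ∈ p.support
  hpath : ∀ i, ∃! p : G.Walk (a i) (b i),
    IsInducedPath G p ∧ Odd p.length ∧ (∀ x, Interior p x → x ∈ E)
  habne : ∀ i i', i ≠ i' →
    ¬ G.Adj (a i) (a i') ∧ ¬ G.Adj (a i) (b i') ∧ ¬ G.Adj (b i) (b i')
  hcd : ∀ j, ¬ G.Adj (c j) (d j)
  hcdall : ∀ j j', j ≠ j' →
    G.Adj (c j) (c j') ∧ G.Adj (c j) (d j') ∧ G.Adj (d j) (d j')
  cross : ∀ i j,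
    (G.Adj (a i) (c j) ∧ G.Adj (b i) (d j) ∧ ¬ G.Adj (a i) (d j) ∧ ¬ G.Adj (b i) (c j)) ∨
    (G.Adj (a i) (d j) ∧ G.Adj (b i) (c j) ∧ ¬ G.Adj (a i) (c j) ∧ ¬ G.Adj (b i) (d j))

/-- Path-cobipartite graph. -/
def IsPathCobipartite (G : SimpleGraph V) : Prop :=
  Berge G ∧ ∃ A B P : Set V,
    Disjoint A B ∧ Disjoint A P ∧ Disjoint B P ∧ A ∪ B ∪ P = Set.univ ∧
    A.Nonempty ∧ B.Nonempty ∧ G.IsClique A ∧ G.IsClique B ∧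
    ∀ v ∈ P, (G.neighborSet v).ncard = 2 ∧
      ∃ a ∈ A, ∃ b ∈ B, ∃ p : G.Walk a b, IsInducedPath G p ∧ Odd p.length ∧
        Interior p v ∧ (∀ x, Interior p x → x ∈ P) ∧
        (∀ w, G.Adj a w → w ∈ A ∪ P) ∧ (∀ w, G.Adj b w → w ∈ B ∪ P) ∧
        (∀ (a' b' : V), a' ∈ A → b' ∈ B → ∀ p' : G.Walk a' b',
          IsInducedPath G p' → Odd p'.length → Interior p' v →
          (∀ x, Interior p' x → x ∈ P) →
          {x | x ∈ p'.support} = {x | x ∈ p.support})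

/-- `X` induces a path of `G` with one end in `A`, the other in `B` and interior
outside `A ∪ B`. -/
def PathSideOn (G : SimpleGraph V) (X A B : Set V) : Prop :=
  ∃ a ∈ A, ∃ b ∈ B, ∃ p : G.Walk a b, IsInducedPath G p ∧
    {x | x ∈ p.support} = X ∧ ∀ x, Interior p x → x ∉ A ∪ B

/-- The block of a 2-join: keep the side `X` (with attachments `A`, `B`) and replace the
other side by a path `p_0, …, p_k`, `p_0` complete to `A` and `p_k` complete to `B`. -/
def blockGraph (G : SimpleGraph V) (X A B : Set V) (k : ℕ) :
    SimpleGraph (↥X ⊕ Fin (k + 1)) where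
  Adj x y :=
    match x, y with
    | Sum.inl u, Sum.inl v => G.Adj u v
    | Sum.inl u, Sum.inr i => ((i : ℕ) = 0 ∧ (u : V) ∈ A) ∨ ((i : ℕ) = k ∧ (u : V) ∈ B)
    | Sum.inr i, Sum.inl u => ((i : ℕ) = 0 ∧ (u : V) ∈ A) ∨ ((i : ℕ) = k ∧ (u : V) ∈ B)
    | Sum.inr i, Sum.inr j => (i : ℕ) + 1 = (j : ℕ) ∨ (j : ℕ) + 1 = (i : ℕ)
  symm := by
    constructor
    rintro (u | i) (v | j) h
    · exact h.symm
    · exact h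
    · exact h
    · omega
  loopless := by
    constructor
    rintro (u | i) h
    · exact G.irrefl h
    · omega

/-- The graph `G'` obtained from a Bienstock graph `G` by adding two vertices
(`Sum.inr false` and `Sum.inr true`), each adjacent exactly to `u` and `s`. -/
def bienstockExt (G : SimpleGraph V) (u s : V) : SimpleGraph (V ⊕ Bool) where
  Adj x y :=
    match x, y with
    | Sum.inl p, Sum.inl q => G.Adj p q
    | Sum.inl p, Sum.inr _ => p = u ∨ p = s
    | Sum.inr _, Sum.inl q => q = u ∨ q = s
    | Sum.inr _, Sum.inr _ => False
  symm := by
    constructor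
    rintro (p | i) (q | j) h
    · exact h.symm
    · exact h
    · exact h
    · exact h
  loopless := by
    constructor
    rintro (p | i) h
    · exact G.irrefl h
    · exact h

end BSP

namespace LGB
open BSP
variable {V : Type*} {W : Type*} {G : SimpleGraph V} {H : SimpleGraph W}

attribute [local instance] Classical.propDecidable




lemma adj_of_mem_edge {e : Sym2 V} (he : e ∈ G.edgeSet) {x y : V} (hx : x ∈ e) (hy : y ∈ e)
    (hxy : x ≠ y) : G.Adj x y := by
  have h1 : e = s(x, y) := (Sym2.mem_and_mem_iff hxy).1 ⟨hx, hy⟩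
  rw [h1] at he
  exact he

lemma support_eq_map {u v : V} (p : G.Walk u v) :
    p.support = (List.range (p.length + 1)).map p.getVert := by
  induction p with
  | nil => simp [SimpleGraph.Walk.getVert]
  | @cons a b c h q ih =>
    simp [SimpleGraph.Walk.support_cons, ih, List.range_succ_eq_map, List.map_map,
      Function.comp_def]

lemma mem_edges_iff {u v : V} (p : G.Walk u v) {e : Sym2 V} :
    e ∈ p.edges ↔ ∃ i, i < p.length ∧ e = s(p.getVert i, p.getVert (i + 1)) := by
  induction p with
  | nil => simp
  | @cons a b c h q ih =>
    rw [SimpleGraph.Walk.edges_cons, List.mem_cons, ih]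
    constructor
    · rintro (rfl | ⟨i, hi, rfl⟩)
      · exact ⟨0, by simp, by simp [SimpleGraph.Walk.getVert_cons_succ]⟩
      · exact ⟨i + 1, by simpa using hi, by simp⟩
    · rintro ⟨i, hi, rfl⟩
      cases i with
      | zero => left; simp [SimpleGraph.Walk.getVert_cons_succ]
      | succ j => right; exact ⟨j, by simpa using hi, by simp⟩

/-- A "function cycle": an induced cycle presented as a function on indices. -/
structure IsFnCyc (G : SimpleGraph V) (n : ℕ) (f : ℕ → V) : Prop where
  hn : 3 ≤ n
  closed : f n = f 0
  adj : ∀ i, i < n → G.Adj (f i) (f (i + 1))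
  inj : ∀ i, i < n → ∀ j, j < n → f i = f j → i = j
  ind : ∀ i, i < n → ∀ j, j < n → G.Adj (f i) (f j) →
      j = i + 1 ∨ i = j + 1 ∨ (i = 0 ∧ j + 1 = n) ∨ (j = 0 ∧ i + 1 = n)

namespace IsFnCyc

lemma inj' {n : ℕ} {f : ℕ → V} (hf : IsFnCyc G n f) :
    ∀ i, i ≤ n → ∀ j, j ≤ n → f i = f j → i = j ∨ (i = 0 ∧ j = n) ∨ (i = n ∧ j = 0) := by
  intro i hi j hj hij
  rcases Nat.lt_or_ge i n with hi' | hi'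
  · rcases Nat.lt_or_ge j n with hj' | hj'
    · exact Or.inl (hf.inj i hi' j hj' hij)
    · have hjn : j = n := le_antisymm hj hj'
      rw [hjn, hf.closed] at hij
      have := hf.inj i hi' 0 (by omega) hij
      omega
  · have hin : i = n := le_antisymm hi hi'
    rw [hin, hf.closed] at hij
    rcases Nat.lt_or_ge j n with hj' | hj'
    · have := hf.inj 0 (by omega) j hj' hij
      omega
    · omega

end IsFnCyc


lemma cycle_getVert_inj {u : V} (p : G.Walk u u) (hc : p.IsCycle) :
    ∀ i, i < p.length → ∀ j, j < p.length → p.getVert i = p.getVert j → i = j := by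
  have htail : p.support.tail = (List.range p.length).map (fun i => p.getVert (i + 1)) := by
    rw [support_eq_map, List.range_succ_eq_map]
    simp [List.map_map, Function.comp_def]
  have hclosed : p.getVert p.length = p.getVert 0 := by simp
  have hnd := hc.support_nodup
  rw [htail] at hnd
  have key : ∀ a, a < p.length → ∀ b, b < p.length →
      p.getVert (a + 1) = p.getVert (b + 1) → a = b := fun a ha b hb h =>
    List.inj_on_of_nodup_map hnd (List.mem_range.2 ha) (List.mem_range.2 hb) h
  intro i hi j hj hij
  rcases Nat.eq_zero_or_pos i with rfl | hi0
  · rcases Nat.eq_zero_or_pos j with rfl | hj0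
    · rfl
    · exfalso
      have h1 : p.getVert ((p.length - 1) + 1) = p.getVert ((j - 1) + 1) := by
        have : (p.length - 1) + 1 = p.length := by omega
        rw [this, hclosed, hij]
        congr 1
        omega
      have := key _ (by omega : p.length - 1 < p.length) _ (by omega : j - 1 < p.length) h1
      omega
  · rcases Nat.eq_zero_or_pos j with rfl | hj0
    · exfalso
      have h1 : p.getVert ((i - 1) + 1) = p.getVert ((p.length - 1) + 1) := by
        have h2 : (p.length - 1) + 1 = p.length := by omega
        have h3 : (i - 1) + 1 = i := by omega
        rw [h2, hclosed, h3, hij]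
      have := key _ (by omega : i - 1 < p.length) _ (by omega : p.length - 1 < p.length) h1
      omega
    · have h1 : p.getVert ((i - 1) + 1) = p.getVert ((j - 1) + 1) := by
        have h3 : (i - 1) + 1 = i := by omega
        have h4 : (j - 1) + 1 = j := by omega
        rw [h3, h4, hij]
      have := key _ (by omega : i - 1 < p.length) _ (by omega : j - 1 < p.length) h1
      omega

lemma cycle_getVert_inj' {u : V} (p : G.Walk u u) (hc : p.IsCycle) :
    ∀ a, a ≤ p.length → ∀ b, b ≤ p.length → p.getVert a = p.getVert b →
      a = b ∨ (a = 0 ∧ b = p.length) ∨ (a = p.length ∧ b = 0) := by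
  have hclosed : p.getVert p.length = p.getVert 0 := by simp
  have hinj := cycle_getVert_inj p hc
  intro a ha b hb hab
  rcases Nat.lt_or_ge a p.length with ha' | ha'
  · rcases Nat.lt_or_ge b p.length with hb' | hb'
    · exact Or.inl (hinj a ha' b hb' hab)
    · have : b = p.length := by omega
      subst this
      rw [hclosed] at hab
      rcases Nat.eq_zero_or_pos a with rfl | ha0
      · omega
      · exact absurd (hinj a ha' 0 (by omega) hab) (by omega)
  · have : a = p.length := by omega
    subst this
    rw [hclosed] at hab
    rcases Nat.lt_or_ge b p.length with hb' | hb'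
    · rcases Nat.eq_zero_or_pos b with rfl | hb0
      · omega
      · exact absurd (hinj 0 (by omega) b hb' hab) (by omega)
    · omega

lemma isFnCyc_ofWalk {u : V} (p : G.Walk u u) (hc : p.IsCycle)
    (hind : BSP.IsInducedWalk G p) : IsFnCyc G p.length p.getVert := by
  have hn : 3 ≤ p.length := hc.three_le_length
  have hmem : ∀ i, i ≤ p.length → p.getVert i ∈ p.support := by
    intro i hi
    rw [support_eq_map]
    exact List.mem_map_of_mem (List.mem_range.2 (by omega))
  have htail : p.support.tail = (List.range p.length).map (fun i => p.getVert (i + 1)) := by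
    rw [support_eq_map, List.range_succ_eq_map]
    simp [List.map_map, Function.comp_def]
  have hclosed : p.getVert p.length = p.getVert 0 := by simp
  have hinj : ∀ i, i < p.length → ∀ j, j < p.length → p.getVert i = p.getVert j → i = j := by
    have hnd := hc.support_nodup
    rw [htail] at hnd
    have key : ∀ a, a < p.length → ∀ b, b < p.length →
        p.getVert (a + 1) = p.getVert (b + 1) → a = b := fun a ha b hb h =>
      List.inj_on_of_nodup_map hnd (List.mem_range.2 ha) (List.mem_range.2 hb) h
    intro i hi j hj hij
    rcases Nat.eq_zero_or_pos i with rfl | hi0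
    · rcases Nat.eq_zero_or_pos j with rfl | hj0
      · rfl
      · -- getVert 0 = getVert j, 0 < j < n; but getVert 0 = getVert n
        exfalso
        have h1 : p.getVert ((p.length - 1) + 1) = p.getVert ((j - 1) + 1) := by
          have : (p.length - 1) + 1 = p.length := by omega
          rw [this, hclosed, hij]
          congr 1
          omega
        have := key _ (by omega : p.length - 1 < p.length) _ (by omega : j - 1 < p.length) h1
        omega
    · rcases Nat.eq_zero_or_pos j with rfl | hj0
      · exfalso
        have h1 : p.getVert ((i - 1) + 1) = p.getVert ((p.length - 1) + 1) := by
          have h2 : (p.length - 1) + 1 = p.length := by omega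
          have h3 : (i - 1) + 1 = i := by omega
          rw [h2, hclosed, h3, hij]
        have := key _ (by omega : i - 1 < p.length) _ (by omega : p.length - 1 < p.length) h1
        omega
      · have h1 : p.getVert ((i - 1) + 1) = p.getVert ((j - 1) + 1) := by
          have h3 : (i - 1) + 1 = i := by omega
          have h4 : (j - 1) + 1 = j := by omega
          rw [h3, h4, hij]
        have := key _ (by omega : i - 1 < p.length) _ (by omega : j - 1 < p.length) h1
        omega
  refine ⟨hn, hclosed, fun i hi => p.adj_getVert_succ hi, hinj, ?_⟩
  · -- inducedness
    intro i hi j hj hadj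
    have hij : i ≠ j := by
      intro h
      rw [h] at hadj
      exact G.irrefl hadj
    have hedge : s(p.getVert i, p.getVert j) ∈ p.edges :=
      hind _ (hmem i (by omega)) _ (hmem j (by omega)) hadj
    rw [mem_edges_iff] at hedge
    obtain ⟨k, hk, hke⟩ := hedge
    rw [Sym2.eq_iff] at hke
    have inj' : ∀ a, a ≤ p.length → ∀ b, b ≤ p.length → p.getVert a = p.getVert b →
        a = b ∨ (a = 0 ∧ b = p.length) ∨ (a = p.length ∧ b = 0) := by
      intro a ha b hb hab
      rcases Nat.lt_or_ge a p.length with ha' | ha'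
      · rcases Nat.lt_or_ge b p.length with hb' | hb'
        · exact Or.inl (hinj a ha' b hb' hab)
        · have : b = p.length := by omega
          subst this
          rw [hclosed] at hab
          rcases Nat.eq_zero_or_pos a with rfl | ha0
          · omega
          · exact absurd (hinj a ha' 0 (by omega) hab) (by omega)
      · have : a = p.length := by omega
        subst this
        rw [hclosed] at hab
        rcases Nat.lt_or_ge b p.length with hb' | hb'
        · rcases Nat.eq_zero_or_pos b with rfl | hb0
          · omega
          · exact absurd (hinj 0 (by omega) b hb' hab) (by omega)
        · omega
    rcases hke with ⟨h1, h2⟩ | ⟨h1, h2⟩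
    · have e1 := inj' i (by omega) k (by omega) h1
      have e2 := inj' j (by omega) (k + 1) (by omega) h2
      omega
    · have e1 := inj' i (by omega) (k + 1) (by omega) h1
      have e2 := inj' j (by omega) k (by omega) h2
      omega





/-- Build a walk from a function on indices. -/
def walkOfFn (f : ℕ → V) : ∀ n : ℕ, (∀ i, i < n → G.Adj (f i) (f (i + 1))) → G.Walk (f 0) (f n)
  | 0, _ => SimpleGraph.Walk.nil
  | n + 1, h =>
    (walkOfFn f n (fun i hi => h i (by omega))).concat (h n (by omega))

lemma length_walkOfFn (f : ℕ → V) (n : ℕ) (h : ∀ i, i < n → G.Adj (f i) (f (i + 1))) :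
    (walkOfFn f n h).length = n := by
  induction n with
  | zero => rfl
  | succ m ih => simp [walkOfFn, SimpleGraph.Walk.length_concat, ih]

lemma support_walkOfFn (f : ℕ → V) (n : ℕ) (h : ∀ i, i < n → G.Adj (f i) (f (i + 1))) :
    (walkOfFn f n h).support = (List.range (n + 1)).map f := by
  induction n with
  | zero => simp [walkOfFn, List.range_succ]
  | succ m ih =>
    rw [walkOfFn, SimpleGraph.Walk.support_concat, ih, List.range_succ (n := m + 1)]
    simp

lemma edges_walkOfFn (f : ℕ → V) (n : ℕ) (h : ∀ i, i < n → G.Adj (f i) (f (i + 1))) :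
    (walkOfFn f n h).edges = (List.range n).map (fun i => s(f i, f (i + 1))) := by
  induction n with
  | zero => simp [walkOfFn]
  | succ m ih =>
    rw [walkOfFn, SimpleGraph.Walk.edges_concat, ih, List.range_succ (n := m)]
    simp

lemma isFnCyc_toWalk {n : ℕ} {f : ℕ → V} (hf : IsFnCyc G n f) (hn5 : 5 ≤ n) :
    ∃ p : G.Walk (f 0) (f 0), p.length = n ∧ p.IsCycle ∧ BSP.IsInducedWalk G p := by
  classical
  set p0 : G.Walk (f 0) (f n) := walkOfFn f n hf.adj with hp0
  refine ⟨p0.copy rfl hf.closed, ?_, ?_, ?_⟩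
  · simp [hp0, length_walkOfFn]
  · rw [SimpleGraph.Walk.isCycle_def]
    refine ⟨⟨?_⟩, ?_, ?_⟩
    · -- edges nodup
      rw [SimpleGraph.Walk.edges_copy, edges_walkOfFn]
      refine List.Nodup.map_on ?_ List.nodup_range
      intro i hi j hj hij
      rw [List.mem_range] at hi hj
      rw [Sym2.eq_iff] at hij
      rcases hij with ⟨h1, h2⟩ | ⟨h1, h2⟩
      · have := hf.inj' i (by omega) j (by omega) h1
        omega
      · have e1 := hf.inj' i (by omega) (j + 1) (by omega) h1
        have e2 := hf.inj' (i + 1) (by omega) j (by omega) h2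
        omega
    · -- nonempty
      intro hnil
      have : (p0.copy rfl hf.closed).length = 0 := by rw [hnil]; rfl
      rw [SimpleGraph.Walk.length_copy, length_walkOfFn] at this
      omega
    · -- support tail nodup
      rw [SimpleGraph.Walk.support_copy, support_walkOfFn, List.range_succ_eq_map]
      simp only [List.map_cons, List.map_map, List.tail_cons]
      refine List.Nodup.map_on ?_ List.nodup_range
      intro i hi j hj hij
      rw [List.mem_range] at hi hj
      have := hf.inj' (i + 1) (by omega) (j + 1) (by omega) hij
      omega
  · -- induced
    intro x hx y hy hadj
    rw [SimpleGraph.Walk.support_copy, support_walkOfFn] at hx hy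
    rw [SimpleGraph.Walk.edges_copy, edges_walkOfFn]
    obtain ⟨i, hi, rfl⟩ := List.mem_map.1 hx
    obtain ⟨j, hj, rfl⟩ := List.mem_map.1 hy
    rw [List.mem_range] at hi hj
    -- normalize i, j to < n
    have hmain : ∀ a b : ℕ, a < n → b < n → G.Adj (f a) (f b) →
        s(f a, f b) ∈ (List.range n).map (fun i => s(f i, f (i + 1))) := by
      intro a b ha hb hab
      rcases hf.ind a ha b hb hab with rfl | rfl | ⟨rfl, hbn⟩ | ⟨rfl, han⟩
      · exact List.mem_map.2 ⟨a, List.mem_range.2 ha, rfl⟩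
      · rw [Sym2.eq_swap]
        exact List.mem_map.2 ⟨b, List.mem_range.2 hb, rfl⟩
      · refine List.mem_map.2 ⟨b, List.mem_range.2 hb, ?_⟩
        rw [hbn, hf.closed]
        exact Sym2.eq_swap
      · refine List.mem_map.2 ⟨a, List.mem_range.2 ha, ?_⟩
        rw [han, hf.closed]
    rcases Nat.lt_or_ge i n with hi' | hi'
    · rcases Nat.lt_or_ge j n with hj' | hj'
      · exact hmain i j hi' hj' hadj
      · have hjn : j = n := by omega
        rw [hjn, hf.closed] at hadj ⊢
        exact hmain i 0 hi' (by omega) hadj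
    · have hin : i = n := by omega
      rcases Nat.lt_or_ge j n with hj' | hj'
      · rw [hin, hf.closed] at hadj ⊢
        exact hmain 0 j (by omega) hj' hadj
      · exfalso
        have hjn : j = n := by omega
        rw [hin, hjn] at hadj
        exact G.irrefl hadj





lemma hasOddHole_of_isFnCyc {n : ℕ} {f : ℕ → V} (hf : IsFnCyc G n f) (hodd : Odd n)
    (hn5 : 5 ≤ n) : BSP.HasOddHole G := by
  obtain ⟨p, hlen, hcyc, hind⟩ := isFnCyc_toWalk hf hn5
  exact ⟨f 0, p, ⟨hcyc, hind⟩, hlen ▸ hodd, hlen ▸ hn5⟩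

lemma exists_isFnCyc_of_hasOddHole (h : BSP.HasOddHole G) :
    ∃ (n : ℕ) (f : ℕ → V), Odd n ∧ 5 ≤ n ∧ IsFnCyc G n f := by
  obtain ⟨u, p, ⟨hcyc, hind⟩, hodd, h5⟩ := h
  exact ⟨p.length, p.getVert, hodd, h5, isFnCyc_ofWalk p hcyc hind⟩

/-- In a path from `a` to `b`, if the edge `s(a,b)` occurs then the path has length 1. -/
lemma path_edge_ends {a b : V} (q : G.Walk a b) (hq : q.IsPath) (he : s(a, b) ∈ q.edges) :
    q.length = 1 := by
  cases q with
  | nil => simp at he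
  | @cons _ c _ h' q' =>
    rw [SimpleGraph.Walk.edges_cons, List.mem_cons] at he
    rcases he with he | he
    · rw [Sym2.eq_iff] at he
      rcases he with ⟨-, rfl⟩ | ⟨rfl, rfl⟩
      · -- q' : Walk b b is a path; must be nil
        have hq' := hq.of_cons
        cases q' with
        | nil => simp
        | @cons _ d _ h'' q'' =>
          exfalso
          rw [SimpleGraph.Walk.cons_isPath_iff] at hq'
          exact hq'.2 (SimpleGraph.Walk.end_mem_support q'')
      · exact absurd h' G.irrefl
    · exfalso
      rw [SimpleGraph.Walk.cons_isPath_iff] at hq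
      exact hq.2 (SimpleGraph.Walk.fst_mem_support_of_mem_edges q' he)

/-- Any odd closed walk contains an odd cycle. -/
lemma exists_odd_cycle : ∀ (n : ℕ) (u : V) (p : G.Walk u u), p.length = n → Odd n →
    ∃ (x : V) (c : G.Walk x x), c.IsCycle ∧ Odd c.length := by
  intro n
  induction n using Nat.strong_induction_on with
  | _ n ih =>
    intro u p hlen hodd
    obtain ⟨m0, hm0⟩ := hodd
    have hodd : Odd n := ⟨m0, hm0⟩
    cases p with
    | nil => simp at hlen; omega
    | @cons _ v _ h q =>
      by_cases hq : q.IsPath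
      · by_cases he : s(u, v) ∈ q.edges
        · exfalso
          have h1 : q.length = 1 := by
            apply path_edge_ends q hq
            rw [Sym2.eq_swap]
            exact he
          rw [SimpleGraph.Walk.length_cons, h1] at hlen
          omega
        · exact ⟨u, SimpleGraph.Walk.cons h q,
            (SimpleGraph.Walk.cons_isCycle_iff q h).2 ⟨hq, he⟩, hlen ▸ hodd⟩
      · rw [SimpleGraph.Walk.isPath_def] at hq
        obtain ⟨x, hx⟩ := List.exists_duplicate_iff_not_nodup.2 hq
        have hxm : x ∈ q.support := hx.mem
        classical
        have hcount : 2 ≤ q.support.count x := List.duplicate_iff_two_le_count.1 hx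
        have hsupp : q.support = (q.takeUntil x hxm).support ++ (q.dropUntil x hxm).support.tail := by
          conv_lhs => rw [← q.take_spec hxm]
          rw [SimpleGraph.Walk.support_append]
        have hcount1 : (q.takeUntil x hxm).support.count x = 1 :=
          q.count_support_takeUntil_eq_one hxm
        have hxd : x ∈ (q.dropUntil x hxm).support.tail := by
          rw [hsupp, List.count_append, hcount1] at hcount
          exact List.count_pos_iff.1 (by omega)
        have hlenq : (q.takeUntil x hxm).length + (q.dropUntil x hxm).length = q.length := by
          conv_rhs => rw [← q.take_spec hxm]
          rw [SimpleGraph.Walk.length_append]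
        set t := q.takeUntil x hxm with ht
        generalize hdq : q.dropUntil x hxm = d at hxd hlenq
        cases d with
        | nil => simp at hxd
        | @cons _ y _ h2 d2 =>
          rw [SimpleGraph.Walk.support_cons, List.tail_cons] at hxd
          have hd2 : (d2.takeUntil x hxd).length + (d2.dropUntil x hxd).length = d2.length := by
            conv_rhs => rw [← d2.take_spec hxd]
            rw [SimpleGraph.Walk.length_append]
          set c := SimpleGraph.Walk.cons h2 (d2.takeUntil x hxd) with hc
          set r := d2.dropUntil x hxd with hr
          set p' := SimpleGraph.Walk.cons h (t.append r) with hp'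
          have hclen : c.length = (d2.takeUntil x hxd).length + 1 := by
            rw [hc, SimpleGraph.Walk.length_cons]
          have hplen : p'.length = t.length + r.length + 1 := by
            rw [hp', SimpleGraph.Walk.length_cons, SimpleGraph.Walk.length_append]
          have hlen' : q.length + 1 = n := by
            rw [SimpleGraph.Walk.length_cons] at hlen
            exact hlen
          have hlc : c.length + p'.length = n := by
            rw [hclen, hplen]
            rw [SimpleGraph.Walk.length_cons] at hlenq
            omega
          rcases Nat.even_or_odd c.length |>.symm with hco | hce
          · exact ih c.length (by omega) x c rfl hco
          · have hp'odd : Odd p'.length := by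
              rcases hce with ⟨k, hk⟩
              exact ⟨(p'.length - 1) / 2, by omega⟩
            exact ih p'.length (by omega) u p' rfl hp'odd




/-- A graph with no odd closed walk is 2-colorable. -/
lemma colorable_two_of_no_odd_closed_walk
    (h : ∀ (u : W) (p : H.Walk u u), ¬ Odd p.length) : H.Colorable 2 := by
  classical
  have hrep : ∀ w : W, H.Reachable ((H.connectedComponentMk w).out) w := by
    intro w
    exact SimpleGraph.ConnectedComponent.exact ((H.connectedComponentMk w).out_eq)
  let pw : ∀ w : W, H.Walk ((H.connectedComponentMk w).out) w := fun w => (hrep w).some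
  have C : H.Coloring Bool := by
    refine SimpleGraph.Coloring.mk (fun w => decide (Odd (pw w).length)) ?_
    intro a b hab hcol
    simp only [decide_eq_decide] at hcol
    have hcc : H.connectedComponentMk a = H.connectedComponentMk b :=
      SimpleGraph.ConnectedComponent.connectedComponentMk_eq_of_adj hab
    have hout : (H.connectedComponentMk a).out = (H.connectedComponentMk b).out := by rw [hcc]
    -- closed walk : rep a → a → b → rep b = rep a
    let q : H.Walk ((H.connectedComponentMk a).out) ((H.connectedComponentMk a).out) :=
      ((pw a).append (SimpleGraph.Walk.cons hab
        ((pw b).copy hout.symm rfl).reverse))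
    have hq : q.length = (pw a).length + ((pw b).length + 1) := by
      simp [q, SimpleGraph.Walk.length_append, SimpleGraph.Walk.length_cons,
        SimpleGraph.Walk.length_reverse]
    have := h _ q
    rw [hq] at this
    simp only [Nat.odd_iff] at hcol this
    omega
  have := C.colorable
  simpa using this

/-- Bool colorings rule out triangles. -/
lemma no_triangle_of_coloring (C : H.Coloring Bool) {a b c : W}
    (hab : H.Adj a b) (hbc : H.Adj b c) (hac : H.Adj a c) : False := by
  have h1 := C.valid hab
  have h2 := C.valid hbc
  have h3 := C.valid hac
  cases hca : C a <;> cases hcb : C b <;> cases hcc : C c <;> simp_all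


lemma three_mem {e : Sym2 W} {x y z : W} (hx : x ∈ e) (hy : y ∈ e) (hz : z ∈ e) :
    x = y ∨ x = z ∨ y = z := by
  induction e with
  | _ a b =>
    rw [Sym2.mem_iff] at hx hy hz
    rcases hx with rfl | rfl <;> rcases hy with rfl | rfl <;> rcases hz with rfl | rfl <;> tauto

lemma inter_unique {e f : Sym2 W} (hne : e ≠ f) {x y : W} (hx : x ∈ e) (hx' : x ∈ f)
    (hy : y ∈ e) (hy' : y ∈ f) : x = y := by
  by_contra hxy
  exact hne (Sym2.eq_of_ne_mem hxy hx hy hx' hy')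

section Forward

variable (hiso : G ≃g H.lineGraph)

theorem forward_noOddHole (hiso : G ≃g H.lineGraph) (hcol : H.Colorable 2) :
    ¬ BSP.HasOddHole G := by
  intro hhole
  obtain ⟨n, f, hodd, hn5, hf⟩ := exists_isFnCyc_of_hasOddHole hhole
  obtain ⟨c0⟩ := hcol
  let C : H.Coloring Bool := H.recolorOfEquiv finTwoEquiv c0
  set g : ℕ → H.edgeSet := fun i => hiso (f i) with hg
  have hgcl : g n = g 0 := by simp only [hg, hf.closed]
  have hne : ∀ i, i < n → ∀ j, j < n → i ≠ j → g i ≠ g j := by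
    intro i hi j hj hij he
    exact hij (hf.inj i hi j hj (hiso.toEquiv.injective he))
  have hadjg : ∀ i, i < n → H.lineGraph.Adj (g i) (g (i + 1)) :=
    fun i hi => hiso.map_rel_iff.2 (hf.adj i hi)
  have hnonadj : ∀ i, i < n → ∀ j, j < n → H.lineGraph.Adj (g i) (g j) →
      j = i + 1 ∨ i = j + 1 ∨ (i = 0 ∧ j + 1 = n) ∨ (j = 0 ∧ i + 1 = n) :=
    fun i hi j hj h => hf.ind i hi j hj (hiso.map_rel_iff.1 h)
  have hshare : ∀ i, i < n → ∃ v : W, v ∈ (g i : Sym2 W) ∧ v ∈ (g (i + 1) : Sym2 W) := by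
    intro i hi
    obtain ⟨-, v, hv1, hv2⟩ := (SimpleGraph.lineGraph_adj_iff_exists).1 (hadjg i hi)
    exact ⟨v, hv1, hv2⟩
  classical
  let v : ℕ → W := fun i => if h : i < n then (hshare i h).choose else (hshare 0 (by omega)).choose
  have hv : ∀ i, (h : i < n) → v i ∈ (g i : Sym2 W) ∧ v i ∈ (g (i + 1) : Sym2 W) := by
    intro i h
    have : v i = (hshare i h).choose := by simp [v, dif_pos h]
    rw [this]
    exact (hshare i h).choose_spec
  have hedge : ∀ i, (g i : Sym2 W) ∈ H.edgeSet := fun i => (g i).2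
  -- distinct consecutive shared vertices
  have hvne : ∀ i, i + 1 < n → v i ≠ v (i + 1) := by
    intro i hi heq
    have h1 := (hv i (by omega)).1
    have h2 := (hv (i + 1) hi).2
    rw [← heq] at h2
    -- v i ∈ g i and ∈ g (i+2)
    rcases Nat.lt_or_ge (i + 2) n with h3 | h3
    · have hadj : H.lineGraph.Adj (g i) (g (i + 2)) :=
        (SimpleGraph.lineGraph_adj_iff_exists).2 ⟨hne i (by omega) (i + 2) h3 (by omega), v i, h1, h2⟩
      have := hnonadj i (by omega) (i + 2) h3 hadj
      omega
    · have h4 : i + 2 = n := by omega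
      have h5 : g (i + 2) = g 0 := by rw [h4, hgcl]
      rw [h5] at h2
      have hadj : H.lineGraph.Adj (g i) (g 0) :=
        (SimpleGraph.lineGraph_adj_iff_exists).2 ⟨hne i (by omega) 0 (by omega) (by omega), v i, h1, h2⟩
      have := hnonadj i (by omega) 0 (by omega) hadj
      omega
  have hvadj : ∀ i, i + 1 < n → H.Adj (v i) (v (i + 1)) := by
    intro i hi
    exact adj_of_mem_edge (hedge (i + 1)) (hv i (by omega)).2 (hv (i + 1) hi).1 (hvne i hi)
  have hpar : ∀ i, i < n → ((C (v i) = C (v 0)) ↔ Even i) := by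
    intro i
    induction i with
    | zero => simp
    | succ k ih =>
      intro hk
      have h1 := ih (by omega)
      have h2 : C (v k) ≠ C (v (k + 1)) := C.valid (hvadj k hk)
      rw [Nat.even_add_one, ← h1]
      cases hb1 : (C (v (k + 1))) <;> cases hb2 : (C (v k)) <;> cases hb3 : (C (v 0)) <;>
        simp_all
  -- wrap around
  have hvn1 : v (n - 1) ∈ (g 0 : Sym2 W) := by
    have := (hv (n - 1) (by omega)).2
    have h4 : n - 1 + 1 = n := by omega
    rw [h4, hgcl] at this
    exact this
  have hwne : v (n - 1) ≠ v 0 := by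
    intro heq
    have h1 := (hv (n - 1) (by omega)).1
    have h2 := (hv 0 (by omega)).2
    rw [← heq] at h2
    have hadj : H.lineGraph.Adj (g (n - 1)) (g 1) :=
      (SimpleGraph.lineGraph_adj_iff_exists).2
        ⟨hne (n - 1) (by omega) 1 (by omega) (by omega), v (n - 1), h1, h2⟩
    have := hnonadj (n - 1) (by omega) 1 (by omega) hadj
    omega
  have hwadj : H.Adj (v (n - 1)) (v 0) :=
    adj_of_mem_edge (hedge 0) hvn1 (hv 0 (by omega)).1 hwne
  have h2 : C (v (n - 1)) ≠ C (v 0) := C.valid hwadj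
  have h3 : Even (n - 1) := by
    rcases hodd with ⟨m, hm⟩
    exact ⟨m, by omega⟩
  exact h2 ((hpar (n - 1) (by omega)).2 h3)

theorem forward_clawFree (hiso : G ≃g H.lineGraph) : BSP.ClawFree G := by
  constructor
  intro emb
  classical
  let F : BSP.claw ↪g H.lineGraph := hiso.toEmbedding.comp emb
  have hadj : ∀ i : Fin 3, H.lineGraph.Adj (F (Sum.inl 0)) (F (Sum.inr i)) := by
    intro i
    apply F.map_rel_iff.2
    simp [BSP.claw]
  have hnadj : ∀ i j : Fin 3, ¬ H.lineGraph.Adj (F (Sum.inr i)) (F (Sum.inr j)) := by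
    intro i j h
    have := F.map_rel_iff.1 h
    simp [BSP.claw] at this
  have hshare : ∀ i : Fin 3, ∃ v : W,
      v ∈ (F (Sum.inl 0) : Sym2 W) ∧ v ∈ (F (Sum.inr i) : Sym2 W) := by
    intro i
    obtain ⟨-, v, hv1, hv2⟩ := (SimpleGraph.lineGraph_adj_iff_exists).1 (hadj i)
    exact ⟨v, hv1, hv2⟩
  let v : Fin 3 → W := fun i => (hshare i).choose
  have hv : ∀ i, v i ∈ (F (Sum.inl 0) : Sym2 W) ∧ v i ∈ (F (Sum.inr i) : Sym2 W) :=
    fun i => (hshare i).choose_spec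
  have key : ∀ i j : Fin 3, i ≠ j → v i ≠ v j := by
    intro i j hij heq
    apply hnadj i j
    refine (SimpleGraph.lineGraph_adj_iff_exists).2 ⟨?_, v i, (hv i).2, heq ▸ (hv j).2⟩
    intro h
    have : Sum.inr i = Sum.inr j := F.injective h
    simp only [Sum.inr.injEq] at this
    exact hij this
  have := three_mem (hv 0).1 (hv 1).1 (hv 2).1
  rcases this with h | h | h
  · exact key 0 1 (by decide) h
  · exact key 0 2 (by decide) h
  · exact key 1 2 (by decide) h

theorem forward_diamondFree (hiso : G ≃g H.lineGraph) (hcol : H.Colorable 2) :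
    BSP.DiamondFree G := by
  obtain ⟨c0⟩ := hcol
  let C : H.Coloring Bool := H.recolorOfEquiv finTwoEquiv c0
  constructor
  intro emb
  classical
  let F : BSP.diamond ↪g H.lineGraph := hiso.toEmbedding.comp emb
  have hdadj : ∀ i j : Fin 4, i ≠ j → ¬(i = 0 ∧ j = 1) → ¬(i = 1 ∧ j = 0) →
      BSP.diamond.Adj i j := by
    intro i j h1 h2 h3
    simp only [BSP.diamond, SimpleGraph.deleteEdges_adj, SimpleGraph.top_adj,
      Set.mem_singleton_iff, Sym2.eq_iff]
    refine ⟨h1, ?_⟩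
    rintro (⟨rfl, rfl⟩ | ⟨rfl, rfl⟩)
    · exact h2 ⟨rfl, rfl⟩
    · exact h3 ⟨rfl, rfl⟩
  have hnadj01 : ¬ BSP.diamond.Adj 0 1 := by
    simp [BSP.diamond, SimpleGraph.deleteEdges_adj]
  -- common vertex of three pairwise adjacent edges
  have common : ∀ e1 e2 e3 : H.edgeSet, H.lineGraph.Adj e1 e2 → H.lineGraph.Adj e1 e3 →
      H.lineGraph.Adj e2 e3 → ∃ v : W, v ∈ (e1 : Sym2 W) ∧ v ∈ (e2 : Sym2 W) ∧
      v ∈ (e3 : Sym2 W) := by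
    intro e1 e2 e3 h12 h13 h23
    obtain ⟨-, x, hx1, hx2⟩ := (SimpleGraph.lineGraph_adj_iff_exists).1 h12
    obtain ⟨-, y, hy1, hy3⟩ := (SimpleGraph.lineGraph_adj_iff_exists).1 h13
    obtain ⟨-, z, hz2, hz3⟩ := (SimpleGraph.lineGraph_adj_iff_exists).1 h23
    by_cases hxy : x = y
    · exact ⟨x, hx1, hx2, hxy ▸ hy3⟩
    by_cases hxz : x = z
    · exact ⟨x, hx1, hx2, hxz ▸ hz3⟩
    by_cases hyz : y = z
    · exact ⟨y, hy1, hyz ▸ hz2, hy3⟩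
    exfalso
    have a1 : H.Adj x y := adj_of_mem_edge e1.2 hx1 hy1 hxy
    have a2 : H.Adj x z := adj_of_mem_edge e2.2 hx2 hz2 hxz
    have a3 : H.Adj y z := adj_of_mem_edge e3.2 hy3 hz3 hyz
    exact no_triangle_of_coloring C a1 a3 a2
  have h20 := F.map_rel_iff.2 (hdadj 2 0 (by decide) (by decide) (by decide))
  have h21 := F.map_rel_iff.2 (hdadj 2 1 (by decide) (by decide) (by decide))
  have h23 := F.map_rel_iff.2 (hdadj 2 3 (by decide) (by decide) (by decide))
  have h30 := F.map_rel_iff.2 (hdadj 3 0 (by decide) (by decide) (by decide))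
  have h31 := F.map_rel_iff.2 (hdadj 3 1 (by decide) (by decide) (by decide))
  obtain ⟨a, ha2, ha3, ha0⟩ := common (F 2) (F 3) (F 0) h23 h20 h30
  obtain ⟨b, hb2, hb3, hb1⟩ := common (F 2) (F 3) (F 1) h23 h21 h31
  have hF23 : (F 2 : Sym2 W) ≠ (F 3 : Sym2 W) := by
    intro h
    exact absurd (F.injective (Subtype.coe_injective h)) (by decide)
  have hab : a = b := inter_unique hF23 ha2 ha3 hb2 hb3
  -- now F 0 and F 1 share a vertex
  have hF01 : (F 0) ≠ (F 1) := fun h => absurd (F.injective h) (by decide)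
  have : H.lineGraph.Adj (F 0) (F 1) :=
    (SimpleGraph.lineGraph_adj_iff_exists).2 ⟨hF01, a, ha0, hab ▸ hb1⟩
  exact hnadj01 (F.map_rel_iff.1 this)

end Forward



/-- Elimination form of diamond-freeness. -/
lemma diamond_rule (hD : BSP.DiamondFree G) {a b c d : V} (hab : G.Adj a b) (hac : G.Adj a c)
    (had : G.Adj a d) (hbc : G.Adj b c) (hbd : G.Adj b d) (hcd : c ≠ d) : G.Adj c d := by
  by_contra hn
  have hac' : c ≠ a := hac.ne'
  have had' : d ≠ a := had.ne'
  have hbc' : c ≠ b := hbc.ne'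
  have hbd' : d ≠ b := hbd.ne'
  have hab' : a ≠ b := hab.ne
  refine hD.false (⟨⟨![c, d, a, b], ?_⟩, ?_⟩ : BSP.diamond ↪g G)
  · intro x y hxy
    fin_cases x <;> fin_cases y <;>
      simp_all
  · intro x y
    show G.Adj (![c, d, a, b] x) (![c, d, a, b] y) ↔ _
    simp only [BSP.diamond, SimpleGraph.deleteEdges_adj, SimpleGraph.top_adj,
      Set.mem_singleton_iff, Sym2.eq_iff]
    fin_cases x <;> fin_cases y <;>
      simp_all [G.adj_comm, eq_comm]

/-- Elimination form of claw-freeness. -/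
lemma claw_rule (hC : BSP.ClawFree G) {a b c d : V} (hab : G.Adj a b) (hac : G.Adj a c)
    (had : G.Adj a d) (hbc : b ≠ c) (hbd : b ≠ d) (hcd : c ≠ d) (nbc : ¬ G.Adj b c)
    (nbd : ¬ G.Adj b d) (ncd : ¬ G.Adj c d) : False := by
  have hab' : a ≠ b := hab.ne
  have hac' : a ≠ c := hac.ne
  have had' : a ≠ d := had.ne
  refine hC.false (⟨⟨Sum.elim (fun _ => a) ![b, c, d], ?_⟩, ?_⟩ : BSP.claw ↪g G)
  · rintro (x | x) (y | y) hxy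
    · simp [Subsingleton.elim x y]
    · exfalso
      fin_cases y <;> simp_all
    · exfalso
      fin_cases x <;> simp_all
    · fin_cases x <;> fin_cases y <;> simp_all
  · rintro (x | x) (y | y)
    · constructor
      · intro h; exact absurd h (G.irrefl (v := a))
      · intro h; simp [BSP.claw] at h
    · show G.Adj (Sum.elim (fun _ => a) ![b, c, d] (Sum.inl x : Fin 1 ⊕ Fin 3)) (Sum.elim (fun _ => a) ![b, c, d] (Sum.inr y : Fin 1 ⊕ Fin 3)) ↔ _
      constructor
      · intro _; simp [BSP.claw]
      · intro _
        fin_cases y <;> simp_all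
    · show G.Adj (Sum.elim (fun _ => a) ![b, c, d] (Sum.inr x : Fin 1 ⊕ Fin 3)) (Sum.elim (fun _ => a) ![b, c, d] (Sum.inl y : Fin 1 ⊕ Fin 3)) ↔ _
      constructor
      · intro _; simp [BSP.claw]
      · intro _
        fin_cases x <;> simp_all [G.adj_comm]
    · show G.Adj (Sum.elim (fun _ => a) ![b, c, d] (Sum.inr x : Fin 1 ⊕ Fin 3)) (Sum.elim (fun _ => a) ![b, c, d] (Sum.inr y : Fin 1 ⊕ Fin 3)) ↔ _
      constructor
      · intro h
        exfalso
        fin_cases x <;> fin_cases y <;>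
          simp_all [G.adj_comm]
      · intro h; simp [BSP.claw] at h

variable (G) in
/-- The (maximal) clique containing the edge `uv`: both ends plus all common neighbors. -/
def Kset (u v : V) : Set V := {w | w = u ∨ w = v ∨ (G.Adj u w ∧ G.Adj v w)}

lemma mem_Kset_left {u v : V} : u ∈ Kset G u v := Or.inl rfl

lemma mem_Kset_right {u v : V} : v ∈ Kset G u v := Or.inr (Or.inl rfl)

lemma Kset_comm {u v : V} : Kset G u v = Kset G v u := by
  ext w
  simp only [Kset, Set.mem_setOf_eq]
  tauto

lemma mem_Kset_of_adj {u v w : V} (h1 : G.Adj u w) (h2 : G.Adj v w) : w ∈ Kset G u v :=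
  Or.inr (Or.inr ⟨h1, h2⟩)

lemma Kset_isClique (hD : BSP.DiamondFree G) {u v : V} (huv : G.Adj u v) :
    G.IsClique (Kset G u v) := by
  rintro x (rfl | rfl | ⟨hx1, hx2⟩) y (rfl | rfl | ⟨hy1, hy2⟩) hxy
  · exact absurd rfl hxy
  · exact huv
  · exact hy1
  · exact huv.symm
  · exact absurd rfl hxy
  · exact hy2
  · exact hx1.symm
  · exact hx2.symm
  · exact diamond_rule hD huv hx1 hy1 hx2 hy2 hxy

/-- "Transitivity" of adjacency among neighbors of `u`. -/
lemma nbr_trans (hD : BSP.DiamondFree G) {u p q r : V} (hp : G.Adj u p) (hq : G.Adj u q)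
    (hr : G.Adj u r) (h1 : p = q ∨ G.Adj p q) (h2 : q = r ∨ G.Adj q r) :
    p = r ∨ G.Adj p r := by
  rcases h1 with rfl | h1
  · exact h2
  · rcases h2 with rfl | h2
    · exact Or.inr h1
    · by_cases hpr : p = r
      · exact Or.inl hpr
      · exact Or.inr (diamond_rule hD hq hp hr h1.symm h2 hpr)

lemma Kset_rotate (hD : BSP.DiamondFree G) {u v y : V} (huv : G.Adj u v)
    (hy : y ∈ Kset G u v) (hyu : y ≠ u) : Kset G u y = Kset G u v := by
  have huy : G.Adj u y := Kset_isClique hD huv mem_Kset_left hy (Ne.symm hyu)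
  have hRyv : y = v ∨ G.Adj y v := by
    rcases hy with rfl | rfl | ⟨h1, h2⟩
    · exact absurd rfl hyu
    · exact Or.inl rfl
    · exact Or.inr h2.symm
  ext w
  simp only [Kset, Set.mem_setOf_eq]
  constructor
  · rintro (rfl | rfl | ⟨h1, h2⟩)
    · exact Or.inl rfl
    · rcases hy with rfl | rfl | ⟨ha, hb⟩
      · exact absurd rfl hyu
      · exact Or.inr (Or.inl rfl)
      · exact Or.inr (Or.inr ⟨ha, hb⟩)
    · rcases nbr_trans hD h1 huy huv (Or.inr h2.symm) hRyv with rfl | h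
      · exact Or.inr (Or.inl rfl)
      · exact Or.inr (Or.inr ⟨h1, h.symm⟩)
  · rintro (rfl | rfl | ⟨h1, h2⟩)
    · exact Or.inl rfl
    · rcases hRyv with rfl | h
      · exact Or.inr (Or.inl rfl)
      · exact Or.inr (Or.inr ⟨huv, h⟩)
    · rcases nbr_trans hD h1 huv huy (Or.inr h2.symm)
        (hRyv.elim (fun h => Or.inl h.symm) (fun h => Or.inr h.symm)) with rfl | h
      · exact Or.inr (Or.inl rfl)
      · exact Or.inr (Or.inr ⟨h1, h.symm⟩)

variable (G) in
/-- The two "labels" (endpoints in the root bipartite graph) of a vertex. -/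
noncomputable def lab (x : V) : (Set V ⊕ (V × Bool)) × (Set V ⊕ (V × Bool)) :=
  if h : ∃ y, ∃ z, G.Adj x y ∧ G.Adj x z ∧ Kset G x y ≠ Kset G x z then
    (Sum.inl (Kset G x h.choose), Sum.inl (Kset G x h.choose_spec.choose))
  else if h' : ∃ y, G.Adj x y then (Sum.inl (Kset G x h'.choose), Sum.inr (x, false))
  else (Sum.inr (x, false), Sum.inr (x, true))

lemma lab_ne (x : V) : (lab G x).1 ≠ (lab G x).2 := by
  unfold lab
  split_ifs with h h'
  · simpa using h.choose_spec.choose_spec.2.2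
  · simp
  · simp

lemma lab_inr {x v : V} {b : Bool}
    (h : Sum.inr (v, b) = (lab G x).1 ∨ Sum.inr (v, b) = (lab G x).2) : v = x := by
  unfold lab at h
  split_ifs at h with h1 h2 <;> simp_all <;> tauto

lemma lab_inl {x : V} {K : Set V}
    (h : Sum.inl K = (lab G x).1 ∨ Sum.inl K = (lab G x).2) :
    ∃ y, G.Adj x y ∧ K = Kset G x y := by
  unfold lab at h
  split_ifs at h with h1 h2
  · rcases h with h | h
    · simp only [Prod.fst] at h
      rw [Sum.inl.injEq] at h
      exact ⟨h1.choose, h1.choose_spec.choose_spec.1, h⟩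
    · simp only [Prod.snd] at h
      rw [Sum.inl.injEq] at h
      exact ⟨h1.choose_spec.choose, h1.choose_spec.choose_spec.2.1, h⟩
  · rcases h with h | h
    · simp only [Prod.fst] at h
      rw [Sum.inl.injEq] at h
      exact ⟨h2.choose, h2.choose_spec, h⟩
    · simp at h
  · simp at h

lemma Kset_eq_of_R (hD : BSP.DiamondFree G) {x a b : V} (ha : G.Adj x a) (hb : G.Adj x b)
    (hR : a = b ∨ G.Adj a b) : Kset G x a = Kset G x b := by
  rcases hR with rfl | hR
  · rfl
  · have hbK : b ∈ Kset G x a := mem_Kset_of_adj hb hR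
    exact (Kset_rotate hD ha hbK hb.ne').symm

lemma lab_of_adj (hC : BSP.ClawFree G) (hD : BSP.DiamondFree G) {x y : V} (hxy : G.Adj x y) :
    Sum.inl (Kset G x y) = (lab G x).1 ∨ Sum.inl (Kset G x y) = (lab G x).2 := by
  unfold lab
  split_ifs with h1 h2
  · simp only [Sum.inl.injEq]
    by_contra hcon
    push_neg at hcon
    obtain ⟨hne1, hne2⟩ := hcon
    have hy0 := h1.choose_spec.choose_spec.1
    have hz0 := h1.choose_spec.choose_spec.2.1
    have hne0 := h1.choose_spec.choose_spec.2.2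
    set y0 := h1.choose
    set z0 := h1.choose_spec.choose
    have notR : ∀ a b : V, G.Adj x a → G.Adj x b → Kset G x a ≠ Kset G x b →
        a ≠ b ∧ ¬ G.Adj a b := by
      intro a b ha hb hne
      constructor
      · rintro rfl; exact hne rfl
      · intro hadj; exact hne (Kset_eq_of_R hD ha hb (Or.inr hadj))
    obtain ⟨d1, n1⟩ := notR y y0 hxy hy0 hne1
    obtain ⟨d2, n2⟩ := notR y z0 hxy hz0 hne2
    obtain ⟨d3, n3⟩ := notR y0 z0 hy0 hz0 hne0
    exact claw_rule hC hxy hy0 hz0 d1 d2 d3 n1 n2 n3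
  · left
    simp only [Sum.inl.injEq]
    by_contra hne
    exact h1 ⟨y, h2.choose, hxy, h2.choose_spec, hne⟩
  · exact absurd ⟨y, hxy⟩ h2

lemma mem_of_lab_inl {x : V} {K : Set V}
    (h : Sum.inl K = (lab G x).1 ∨ Sum.inl K = (lab G x).2) : x ∈ K := by
  obtain ⟨y, -, rfl⟩ := lab_inl h
  exact mem_Kset_left

lemma adj_of_common_lab (hD : BSP.DiamondFree G) {x y : V}
    {l : Set V ⊕ (V × Bool)} (hxy : x ≠ y)
    (hx : l = (lab G x).1 ∨ l = (lab G x).2) (hy : l = (lab G y).1 ∨ l = (lab G y).2) :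
    G.Adj x y := by
  rcases l with K | ⟨v, b⟩
  · obtain ⟨a, ha, rfl⟩ := lab_inl hx
    have hyK : y ∈ Kset G x a := mem_of_lab_inl hy
    exact Kset_isClique hD ha mem_Kset_left hyK hxy
  · have h1 := lab_inr hx
    have h2 := lab_inr hy
    exact absurd (h1.symm.trans h2) hxy

lemma lab_pair_inj (hD : BSP.DiamondFree G) {x y : V}
    (h : ((lab G x).1 = (lab G y).1 ∧ (lab G x).2 = (lab G y).2) ∨
      ((lab G x).1 = (lab G y).2 ∧ (lab G x).2 = (lab G y).1)) : x = y := by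
  by_contra hxy
  have hy1 : (lab G x).1 = (lab G y).1 ∨ (lab G x).1 = (lab G y).2 := by tauto
  have hy2 : (lab G x).2 = (lab G y).1 ∨ (lab G x).2 = (lab G y).2 := by tauto
  obtain ⟨K1, hK1⟩ : ∃ K, (lab G x).1 = Sum.inl K := by
    rcases hl : (lab G x).1 with K | ⟨v, b⟩
    · exact ⟨K, rfl⟩
    · rw [hl] at hy1
      exact absurd ((lab_inr (Or.inl hl.symm)).symm.trans (lab_inr hy1)) hxy
  obtain ⟨K2, hK2⟩ : ∃ K, (lab G x).2 = Sum.inl K := by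
    rcases hl : (lab G x).2 with K | ⟨v, b⟩
    · exact ⟨K, rfl⟩
    · rw [hl] at hy2
      exact absurd ((lab_inr (Or.inr hl.symm)).symm.trans (lab_inr hy2)) hxy
  rw [hK1] at hy1
  rw [hK2] at hy2
  have hKne : K1 ≠ K2 := fun h' =>
    lab_ne x ((hK1.trans (congrArg Sum.inl h')).trans hK2.symm)
  have hKxy1 : K1 = Kset G x y := by
    obtain ⟨a, ha, hKa⟩ := lab_inl (Or.inl hK1.symm)
    have hyK : y ∈ K1 := mem_of_lab_inl (x := y) hy1
    rw [hKa] at hyK ⊢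
    exact (Kset_rotate hD ha hyK (Ne.symm hxy)).symm
  have hKxy2 : K2 = Kset G x y := by
    obtain ⟨a, ha, hKa⟩ := lab_inl (Or.inr hK2.symm)
    have hyK : y ∈ K2 := mem_of_lab_inl (x := y) hy2
    rw [hKa] at hyK ⊢
    exact (Kset_rotate hD ha hyK (Ne.symm hxy)).symm
  exact hKne (hKxy1.trans hKxy2.symm)

variable (G) in
/-- The root bipartite graph: vertices are labels, edges are label pairs of vertices of `G`. -/
noncomputable def bipH : SimpleGraph (Set V ⊕ (V × Bool)) where
  Adj a b := a ≠ b ∧ ∃ x : V,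
    ((lab G x).1 = a ∧ (lab G x).2 = b) ∨ ((lab G x).1 = b ∧ (lab G x).2 = a)
  symm := by
    constructor
    rintro a b ⟨hne, x, hx⟩
    exact ⟨hne.symm, x, hx.symm⟩
  loopless := ⟨fun a h => h.1 rfl⟩

set_option maxHeartbeats 1000000 in
lemma bipH_adj {a b : Set V ⊕ (V × Bool)} : (bipH G).Adj a b ↔ a ≠ b ∧ ∃ x : V,
    ((lab G x).1 = a ∧ (lab G x).2 = b) ∨ ((lab G x).1 = b ∧ (lab G x).2 = a) := Iff.rfl

variable (G) in
noncomputable def labEdge (x : V) : (bipH G).edgeSet :=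
  ⟨s((lab G x).1, (lab G x).2), by
    rw [SimpleGraph.mem_edgeSet, bipH_adj]
    exact ⟨lab_ne x, x, Or.inl ⟨rfl, rfl⟩⟩⟩

lemma labEdge_inj (hD : BSP.DiamondFree G) : Function.Injective (labEdge G) := by
  intro x y h
  have h2 : s((lab G x).1, (lab G x).2) = s((lab G y).1, (lab G y).2) :=
    Subtype.ext_iff.1 h
  exact lab_pair_inj hD (Sym2.eq_iff.1 h2)

lemma labEdge_surj : Function.Surjective (labEdge G) := by
  rintro ⟨e, he⟩
  induction e with
  | _ a b =>
    rw [SimpleGraph.mem_edgeSet, bipH_adj] at he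
    obtain ⟨hne, x, hx | hx⟩ := he
    · exact ⟨x, Subtype.ext (by rw [show (labEdge G x : Sym2 _) = s((lab G x).1, (lab G x).2)
        from rfl, hx.1, hx.2])⟩
    · refine ⟨x, Subtype.ext ?_⟩
      rw [show (labEdge G x : Sym2 _) = s((lab G x).1, (lab G x).2) from rfl, hx.1, hx.2]
      exact Sym2.eq_swap

lemma mem_labEdge_iff {x : V} {l : Set V ⊕ (V × Bool)} :
    l ∈ (labEdge G x : Sym2 (Set V ⊕ (V × Bool))) ↔
      l = (lab G x).1 ∨ l = (lab G x).2 := by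
  rw [show (labEdge G x : Sym2 _) = s((lab G x).1, (lab G x).2) from rfl, Sym2.mem_iff]

noncomputable def labIso (hC : BSP.ClawFree G) (hD : BSP.DiamondFree G) :
    G ≃g (bipH G).lineGraph where
  toEquiv := Equiv.ofBijective (labEdge G) ⟨labEdge_inj hD, labEdge_surj⟩
  map_rel_iff' := by
    intro x y
    show (bipH G).lineGraph.Adj (labEdge G x) (labEdge G y) ↔ G.Adj x y
    rw [SimpleGraph.lineGraph_adj_iff_exists]
    constructor
    · rintro ⟨hne, v, hv1, hv2⟩
      have hxy : x ≠ y := fun h => hne (h ▸ rfl)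
      exact adj_of_common_lab hD hxy (mem_labEdge_iff.1 hv1) (mem_labEdge_iff.1 hv2)
    · intro hadj
      refine ⟨fun h => hadj.ne (labEdge_inj hD h), Sum.inl (Kset G x y), ?_, ?_⟩
      · exact mem_labEdge_iff.2 (lab_of_adj hC hD hadj)
      · rw [mem_labEdge_iff, Kset_comm]
        exact lab_of_adj hC hD hadj.symm

lemma lab_two {x : V} {A B l : Set V ⊕ (V × Bool)} (hAB : A ≠ B)
    (hA : A = (lab G x).1 ∨ A = (lab G x).2) (hB : B = (lab G x).1 ∨ B = (lab G x).2)
    (hl : l = (lab G x).1 ∨ l = (lab G x).2) : l = A ∨ l = B := by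
  rcases hA with h1 | h1 <;> rcases hB with h2 | h2 <;> rcases hl with h3 | h3 <;>
    first
      | (exact absurd (h1.trans h2.symm) hAB)
      | (left; exact h3.trans h1.symm)
      | (right; exact h3.trans h2.symm)

set_option maxHeartbeats 1000000 in
lemma bipH_triangle_free (hC : BSP.ClawFree G) (hD : BSP.DiamondFree G)
    {A B C : Set V ⊕ (V × Bool)} (hAB : (bipH G).Adj A B) (hBC : (bipH G).Adj B C)
    (hAC : (bipH G).Adj A C) : False := by
  rw [bipH_adj] at hAB hBC hAC
  obtain ⟨hABne, x, hx⟩ := hAB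
  obtain ⟨hBCne, y, hy⟩ := hBC
  obtain ⟨hACne, z, hz⟩ := hAC
  have hxA : A = (lab G x).1 ∨ A = (lab G x).2 := by tauto
  have hxB : B = (lab G x).1 ∨ B = (lab G x).2 := by tauto
  have hyB : B = (lab G y).1 ∨ B = (lab G y).2 := by tauto
  have hyC : C = (lab G y).1 ∨ C = (lab G y).2 := by tauto
  have hzA : A = (lab G z).1 ∨ A = (lab G z).2 := by tauto
  have hzC : C = (lab G z).1 ∨ C = (lab G z).2 := by tauto
  have hxy : x ≠ y := by
    rintro rfl
    rcases hx with ⟨h1, h2⟩ | ⟨h1, h2⟩ <;> rcases hy with ⟨h3, h4⟩ | ⟨h3, h4⟩ <;> simp_all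
  have hyz : y ≠ z := by
    rintro rfl
    rcases hy with ⟨h1, h2⟩ | ⟨h1, h2⟩ <;> rcases hz with ⟨h3, h4⟩ | ⟨h3, h4⟩ <;> simp_all
  have hxz : x ≠ z := by
    rintro rfl
    rcases hx with ⟨h1, h2⟩ | ⟨h1, h2⟩ <;> rcases hz with ⟨h3, h4⟩ | ⟨h3, h4⟩ <;> simp_all
  have axy : G.Adj x y := adj_of_common_lab hD hxy hxB hyB
  have ayz : G.Adj y z := adj_of_common_lab hD hyz hyC hzC
  have axz : G.Adj x z := adj_of_common_lab hD hxz hxA hzA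
  have m1 := lab_of_adj hC hD axy
  have m2 : Sum.inl (Kset G x y) = (lab G y).1 ∨ Sum.inl (Kset G x y) = (lab G y).2 := by
    rw [Kset_comm]
    exact lab_of_adj hC hD axy.symm
  have m1' := lab_of_adj hC hD axz
  have m2' : Sum.inl (Kset G x z) = (lab G z).1 ∨ Sum.inl (Kset G x z) = (lab G z).2 := by
    rw [Kset_comm]
    exact lab_of_adj hC hD axz.symm
  have e1 := lab_two hABne hxA hxB m1
  have e2 := lab_two hBCne hyB hyC m2
  have hKB : Sum.inl (Kset G x y) = B := by
    rcases e2 with h | h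
    · exact h
    · rcases e1 with h' | h'
      · exact absurd (h'.symm.trans h) hACne
      · exact h'
  have e1' := lab_two hABne hxA hxB m1'
  have e2' := lab_two hACne hzA hzC m2'
  have hKA : Sum.inl (Kset G x z) = A := by
    rcases e1' with h | h
    · exact h
    · rcases e2' with h' | h'
      · exact h'
      · exact absurd (h.symm.trans h') hBCne
  have hrot : Kset G x z = Kset G x y :=
    Kset_rotate hD axy (mem_Kset_of_adj axz ayz) (Ne.symm hxz)
  exact hABne ((hKA.symm.trans (congrArg Sum.inl hrot)).trans hKB)

lemma lab_two_vals {x : V} {aa bb l : Set V ⊕ (V × Bool)}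
    (hp : ((lab G x).1 = aa ∧ (lab G x).2 = bb) ∨ ((lab G x).1 = bb ∧ (lab G x).2 = aa))
    (hl : l = (lab G x).1 ∨ l = (lab G x).2) : l = aa ∨ l = bb := by
  rcases hp with ⟨h1, h2⟩ | ⟨h1, h2⟩ <;> rcases hl with rfl | rfl
  · exact Or.inl h1
  · exact Or.inr h2
  · exact Or.inr h1
  · exact Or.inl h2

set_option maxHeartbeats 1000000 in
theorem bipH_colorable (hC : BSP.ClawFree G) (hD : BSP.DiamondFree G)
    (hO : ¬ BSP.HasOddHole G) : (bipH G).Colorable 2 := by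
  apply colorable_two_of_no_odd_closed_walk
  intro u p hodd
  obtain ⟨x0, c, hcyc, hcodd⟩ := exists_odd_cycle p.length u p rfl hodd
  have h3 : 3 ≤ c.length := hcyc.three_le_length
  have hwcl : c.getVert c.length = c.getVert 0 := by simp
  have hadjw : ∀ i, i < c.length → (bipH G).Adj (c.getVert i) (c.getVert (i + 1)) :=
    fun i hi => c.adj_getVert_succ hi
  have winj := cycle_getVert_inj c hcyc
  have winj' := cycle_getVert_inj' c hcyc
  rcases eq_or_ne c.length 3 with h3' | hne3
  · have a01 := hadjw 0 (by omega)
    have a12 := hadjw 1 (by omega)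
    have a20 := hadjw 2 (by omega)
    rw [show (2 : ℕ) + 1 = c.length from by omega, hwcl] at a20
    exact bipH_triangle_free hC hD a01 a12 a20.symm
  · have h5 : 5 ≤ c.length := by
      rcases hcodd with ⟨k, hk⟩
      omega
    have hspec : ∀ i, i < c.length → ∃ x : V,
        ((lab G x).1 = c.getVert i ∧ (lab G x).2 = c.getVert (i + 1)) ∨
        ((lab G x).1 = c.getVert (i + 1) ∧ (lab G x).2 = c.getVert i) := by
      intro i hi
      obtain ⟨-, x, hx⟩ := bipH_adj.1 (hadjw i hi)
      exact ⟨x, hx⟩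
    let y : ℕ → V := fun i =>
      if h : i < c.length then (hspec i h).choose else (hspec 0 (by omega)).choose
    have hy : ∀ i, (h : i < c.length) →
        ((lab G (y i)).1 = c.getVert i ∧ (lab G (y i)).2 = c.getVert (i + 1)) ∨
        ((lab G (y i)).1 = c.getVert (i + 1) ∧ (lab G (y i)).2 = c.getVert i) := by
      intro i h
      have hyi : y i = (hspec i h).choose := dif_pos h
      rw [hyi]
      exact (hspec i h).choose_spec
    have yinj : ∀ i, i < c.length → ∀ j, j < c.length → y i = y j → i = j := by
      intro i hi j hj hij
      rcases hy i hi with ⟨h1, h2⟩ | ⟨h1, h2⟩ <;> rcases hy j hj with ⟨h3, h4⟩ | ⟨h3, h4⟩ <;>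
        rw [hij] at h1 h2
      · have e1 := winj' i (by omega) j (by omega) (h1.symm.trans h3)
        omega
      · have e1 := winj' i (by omega) (j + 1) (by omega) (h1.symm.trans h3)
        have e2 := winj' (i + 1) (by omega) j (by omega) (h2.symm.trans h4)
        omega
      · have e1 := winj' (i + 1) (by omega) j (by omega) (h1.symm.trans h3)
        have e2 := winj' i (by omega) (j + 1) (by omega) (h2.symm.trans h4)
        omega
      · have e1 := winj' (i + 1) (by omega) (j + 1) (by omega) (h1.symm.trans h3)
        have e2 := winj' i (by omega) j (by omega) (h2.symm.trans h4)
        omega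
    have hlabmem : ∀ i, (h : i < c.length) → ∀ l,
        (l = (lab G (y i)).1 ∨ l = (lab G (y i)).2) →
        l = c.getVert i ∨ l = c.getVert (i + 1) :=
      fun i h l hl => lab_two_vals (hy i h) hl
    have hadjy : ∀ i, i < c.length → ∀ j, j < c.length → i ≠ j →
        G.Adj (y i) (y j) →
        (j = i + 1 ∨ i = j + 1 ∨ (i = 0 ∧ j + 1 = c.length) ∨
          (j = 0 ∧ i + 1 = c.length)) := by
      intro i hi j hj hij hadj
      have m1 := lab_of_adj hC hD hadj
      have m2 : Sum.inl (Kset G (y i) (y j)) = (lab G (y j)).1 ∨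
          Sum.inl (Kset G (y i) (y j)) = (lab G (y j)).2 := by
        rw [Kset_comm]
        exact lab_of_adj hC hD hadj.symm
      have ha := hlabmem i hi _ m1
      have hb := hlabmem j hj _ m2
      rcases ha with ha | ha <;> rcases hb with hb | hb
      · have := winj' i (by omega) j (by omega) (ha.symm.trans hb)
        omega
      · have := winj' i (by omega) (j + 1) (by omega) (ha.symm.trans hb)
        omega
      · have := winj' (i + 1) (by omega) j (by omega) (ha.symm.trans hb)
        omega
      · have := winj' (i + 1) (by omega) (j + 1) (by omega) (ha.symm.trans hb)
        omega
    -- the common-label adjacency along the cycle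
    have hyadj : ∀ i, i < c.length → G.Adj (y i) (y ((i + 1) % c.length)) := by
      intro i hi
      rcases Nat.lt_or_ge (i + 1) c.length with hi1 | hi1
      · rw [Nat.mod_eq_of_lt hi1]
        have hne : y i ≠ y (i + 1) := fun h => by
          have := yinj i hi (i + 1) hi1 h
          omega
        refine adj_of_common_lab hD hne (l := c.getVert (i + 1)) ?_ ?_
        · rcases hy i hi with ⟨h1, h2⟩ | ⟨h1, h2⟩
          · exact Or.inr h2.symm
          · exact Or.inl h1.symm
        · rcases hy (i + 1) hi1 with ⟨h1, h2⟩ | ⟨h1, h2⟩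
          · exact Or.inl h1.symm
          · exact Or.inr h2.symm
      · have hin : i + 1 = c.length := by omega
        have hmod : (i + 1) % c.length = 0 := by
          rw [hin, Nat.mod_self]
        rw [hmod]
        have hne : y i ≠ y 0 := fun h => by
          have := yinj i hi 0 (by omega) h
          omega
        refine adj_of_common_lab hD hne (l := c.getVert 0) ?_ ?_
        · rcases hy i hi with ⟨h1, h2⟩ | ⟨h1, h2⟩
          · rw [hin, hwcl] at h2
            exact Or.inr h2.symm
          · rw [hin, hwcl] at h1
            exact Or.inl h1.symm
        · rcases hy 0 (by omega) with ⟨h1, h2⟩ | ⟨h1, h2⟩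
          · exact Or.inl h1.symm
          · exact Or.inr h2.symm
    have hfc : IsFnCyc G c.length (fun i => y (i % c.length)) := by
      refine ⟨by omega, ?_, ?_, ?_, ?_⟩
      · simp [Nat.mod_self]
      · intro i hi
        rw [Nat.mod_eq_of_lt hi]
        have : (i + 1) % c.length = (i % c.length + 1) % c.length := by
          conv_lhs => rw [← Nat.mod_eq_of_lt hi]
        rw [show i % c.length = i from Nat.mod_eq_of_lt hi] at this
        rw [this] at *
        exact hyadj i hi
      · intro i hi j hj hij
        rw [Nat.mod_eq_of_lt hi, Nat.mod_eq_of_lt hj] at hij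
        exact yinj i hi j hj hij
      · intro i hi j hj hadj
        rw [Nat.mod_eq_of_lt hi, Nat.mod_eq_of_lt hj] at hadj
        have hij : i ≠ j := fun h => G.irrefl (h ▸ hadj)
        exact hadjy i hi j hj hij hadj
    exact hO (hasOddHole_of_isFnCyc hfc hcodd h5)

end LGB

/-- Harary–Holzmann: `G` is the line graph of a bipartite graph iff `G` has
no odd hole, no induced claw and no induced diamond. -/
theorem line_graph_of_bipartite_characterization {V : Type u} (G : SimpleGraph V) :
    BSP.IsLineGraphOfBipartite G ↔
      ¬ BSP.HasOddHole G ∧ BSP.ClawFree G ∧ BSP.DiamondFree G := by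
  constructor
  · rintro ⟨W, H, hcol, ⟨iso⟩⟩
    exact ⟨LGB.forward_noOddHole iso hcol, LGB.forward_clawFree iso,
      LGB.forward_diamondFree iso hcol⟩
  · rintro ⟨hO, hC, hD⟩
    exact ⟨Set V ⊕ (V × Bool), LGB.bipH G, LGB.bipH_colorable hC hD hO, ⟨LGB.labIso hC hD⟩⟩
end

section
/- Let G be a bipartite graph. Then a partition (A,B) of V(G) is a skew partition of G if and only if it is a balanced skew partition of G. -/
open SimpleGraph

universe u

namespace BSP

/-- In a path, an edge incident to the first vertex goes to the second vertex. -/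
lemma edge_from_fst {V : Type*} {G : SimpleGraph V} {u w v b : V}
    (h : G.Adj u w) (q : G.Walk w v) (hp : (SimpleGraph.Walk.cons h q).IsPath)
    (hb : s(u, b) ∈ (SimpleGraph.Walk.cons h q).edges) : b = w := by
  rw [SimpleGraph.Walk.edges_cons, List.mem_cons] at hb
  rcases hb with hb | hb
  · rw [Sym2.eq_iff] at hb
    rcases hb with ⟨-, hbw⟩ | ⟨huw, hbu⟩
    · exact hbw
    · exact absurd (huw ▸ h) (G.irrefl)
  · exact absurd (q.fst_mem_support_of_mem_edges hb)
      ((SimpleGraph.Walk.cons_isPath_iff h q).1 hp).2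

lemma path_loop_length {V : Type*} {G : SimpleGraph V} {u : V} (q : G.Walk u u)
    (h : q.IsPath) : q.length = 0 := by
  cases q with
  | nil => rfl
  | cons hadj q' =>
    rw [SimpleGraph.Walk.cons_isPath_iff] at h
    exact absurd q'.end_mem_support h.2

/-- Endpoints of an induced path of length at least 2 are nonadjacent. -/
lemma ends_not_adj {V : Type*} {G : SimpleGraph V} {x y : V} (p : G.Walk x y)
    (hip : IsInducedPath G p) (hlen : 2 ≤ p.length) : ¬ G.Adj x y := by
  intro hadj
  have hmem := hip.2 x p.start_mem_support y p.end_mem_support hadj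
  cases p with
  | nil => simp at hlen
  | cons h q =>
    have hyw := edge_from_fst h q hip.1 hmem
    subst hyw
    have h0 := path_loop_length q ((SimpleGraph.Walk.cons_isPath_iff h q).1 hip.1).1
    rw [SimpleGraph.Walk.length_cons, h0] at hlen
    omega

lemma fin2_ne_ne {a b c : Fin 2} (h1 : a ≠ b) (h2 : c ≠ b) : a = c := by
  have v1 : a.val ≠ b.val := fun h => h1 (Fin.ext h)
  have v2 : c.val ≠ b.val := fun h => h2 (Fin.ext h)
  have := a.isLt; have := b.isLt; have := c.isLt
  exact Fin.ext (by omega)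

lemma fin2_flip {a b c : Fin 2} (h : a ≠ b) : ¬ b = c ↔ a = c := by
  constructor
  · intro h2
    exact fin2_ne_ne h (fun he => h2 he.symm)
  · intro h2 h3
    exact h (h2.trans h3.symm)

/-- With 2 colors, a walk has even length iff its ends have the same color. -/
lemma walk_parity {V : Type*} {G : SimpleGraph V} (C : G.Coloring (Fin 2)) :
    ∀ {u v : V} (p : G.Walk u v), (Even p.length ↔ C u = C v) := by
  intro u v p
  induction p with
  | nil => simp
  | @cons a b c h q ih =>
    have hne : C a ≠ C b := C.valid h
    rw [SimpleGraph.Walk.length_cons, Nat.even_add_one, ih]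
    exact fin2_flip hne

/-- If `Gᶜ[B]` is disconnected, any two `G`-nonadjacent vertices of `B` have a common
`G`-neighbor in `B`. -/
lemma common_nbr {V : Type*} {G : SimpleGraph V} {B : Set V}
    (hBc : ¬ (Gᶜ.induce B).Connected) (hBne : B.Nonempty)
    {x y : V} (hx : x ∈ B) (hy : y ∈ B) (hxy : ¬ G.Adj x y) :
    ∃ b ∈ B, G.Adj x b ∧ G.Adj y b := by
  haveI : Nonempty ↥B := hBne.to_subtype
  have hpre : ¬ (Gᶜ.induce B).Preconnected := by
    intro h
    exact hBc ⟨h⟩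
  rw [SimpleGraph.Preconnected] at hpre
  push_neg at hpre
  obtain ⟨u', v', huv⟩ := hpre
  have hXY : (Gᶜ.induce B).Reachable ⟨x, hx⟩ ⟨y, hy⟩ := by
    by_cases hxe : x = y
    · subst hxe; rfl
    · refine SimpleGraph.Adj.reachable ?_
      simp only [SimpleGraph.comap_adj, Function.Embedding.coe_subtype,
        SimpleGraph.compl_adj]
      exact ⟨hxe, hxy⟩
  obtain ⟨b, hb⟩ : ∃ b : ↥B, ¬ (Gᶜ.induce B).Reachable ⟨x, hx⟩ b := by
    by_cases h1 : (Gᶜ.induce B).Reachable ⟨x, hx⟩ u'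
    · exact ⟨v', fun h2 => huv (h1.symm.trans h2)⟩
    · exact ⟨u', h1⟩
  have hbY : ¬ (Gᶜ.induce B).Reachable ⟨y, hy⟩ b := fun h => hb (hXY.trans h)
  have key : ∀ (z : V) (hz : z ∈ B), ¬ (Gᶜ.induce B).Reachable ⟨z, hz⟩ b → G.Adj z b := by
    intro z hz hzb
    have hne : z ≠ (b : V) := by
      intro he
      exact hzb (by rw [show (⟨z, hz⟩ : ↥B) = b from Subtype.ext he])
    by_contra hna
    refine hzb (SimpleGraph.Adj.reachable ?_)
    simp only [SimpleGraph.comap_adj, Function.Embedding.coe_subtype,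
      SimpleGraph.compl_adj]
    exact ⟨hne, hna⟩
  exact ⟨b, b.2, key x hx hb, key y hy hbY⟩

lemma fin2_triangle_free {V : Type*} {G : SimpleGraph V} (C : G.Coloring (Fin 2))
    {a b c : V} (hab : G.Adj a b) (hbc : G.Adj b c) (hac : G.Adj a c) : False := by
  have h1 : C a ≠ C b := C.valid hab
  have h2 : C b ≠ C c := C.valid hbc
  have h3 : C a ≠ C c := C.valid hac
  exact h3 (fin2_ne_ne h1 (fun he => h2 he.symm))

end BSP

/-- In a bipartite graph, a partition is a skew partition iff it is a balanced
skew partition. -/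
theorem bipartite_skew_iff_balanced {V : Type*} (G : SimpleGraph V)
    (hbip : G.Colorable 2) (A B : Set V) :
    BSP.IsSkewPartition G A B ↔ BSP.IsBalancedSkewPartition G A B := by
  constructor
  · intro hsk
    obtain ⟨C⟩ := hbip
    obtain ⟨hA, hB, hdis, huniv, hAc, hBc⟩ := hsk
    refine ⟨⟨hA, hB, hdis, huniv, hAc, hBc⟩, ?_, ?_⟩
    · -- paths with ends in B
      intro x y p hip hlen hx hy _
      have hna := BSP.ends_not_adj p hip hlen
      obtain ⟨b, hbB, hxb, hyb⟩ := BSP.common_nbr hBc hB hx hy hna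
      rw [BSP.walk_parity C p]
      exact BSP.fin2_ne_ne (C.valid hxb) (C.valid hyb)
    · -- antipaths with ends in A
      intro x y q hiq hlen hx hy hint
      by_contra hodd
      rw [Nat.not_even_iff_odd] at hodd
      have h3len : 3 ≤ q.length := by
        obtain ⟨k, hk⟩ := hodd; omega
      have toG : ∀ a b : V, a ≠ b → ¬ Gᶜ.Adj a b → G.Adj a b := by
        intro a b hne hn
        by_contra hc
        exact hn ((G.compl_adj a b).2 ⟨hne, hc⟩)
      cases q with
      | nil => simp at h3len
      | @cons _ v1 _ h1 q1 =>
        cases q1 with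
        | nil => simp at h3len
        | @cons _ v2 _ h2 q2 =>
          cases q2 with
          | nil => simp at h3len
          | @cons _ v3 _ h3' q3 =>
            set Q := SimpleGraph.Walk.cons h1 (SimpleGraph.Walk.cons h2
              (SimpleGraph.Walk.cons h3' q3)) with hQ
            have hind := hiq.2
            have hpath : Q.IsPath := hiq.1
            have hnd := hpath.support_nodup
            simp only [hQ, SimpleGraph.Walk.support_cons, List.nodup_cons,
              List.mem_cons] at hnd
            push_neg at hnd
            obtain ⟨⟨hx1, hx2, hxq3⟩, ⟨h12, h1q3⟩, h2q3, hndq3⟩ := hnd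
            have hv3q3 : v3 ∈ q3.support := q3.start_mem_support
            have hx3 : x ≠ v3 := fun he => hxq3 (he ▸ hv3q3)
            have h13 : v1 ≠ v3 := fun he => h1q3 (he ▸ hv3q3)
            have h23 : v2 ≠ v3 := fun he => h2q3 (he ▸ hv3q3)
            have hpath1 : (SimpleGraph.Walk.cons h2
                (SimpleGraph.Walk.cons h3' q3)).IsPath :=
              ((SimpleGraph.Walk.cons_isPath_iff _ _).1 hpath).1
            have hpath2 : (SimpleGraph.Walk.cons h3' q3).IsPath :=
              ((SimpleGraph.Walk.cons_isPath_iff _ _).1 hpath1).1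
            have n02 : ¬ Gᶜ.Adj x v2 := by
              intro had
              have hm := hind x (by simp [hQ]) v2 (by simp [hQ]) had
              exact h12 (BSP.edge_from_fst h1 _ hpath hm).symm
            have n03 : ¬ Gᶜ.Adj x v3 := by
              intro had
              have hm := hind x (by simp [hQ]) v3
                (by simp [hQ, List.mem_cons]) had
              exact h13 (BSP.edge_from_fst h1 _ hpath hm).symm
            have n13 : ¬ Gᶜ.Adj v1 v3 := by
              intro had
              have hm := hind v1 (by simp [hQ]) v3
                (by simp [hQ, List.mem_cons]) had
              rw [hQ, SimpleGraph.Walk.edges_cons, List.mem_cons] at hm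
              rcases hm with hm | hm
              · rw [Sym2.eq_iff] at hm
                rcases hm with ⟨ha, hb⟩ | ⟨ha, hb⟩
                · exact hx1 ha.symm
                · exact hx3 hb.symm
              · exact h23 (BSP.edge_from_fst h2 _ hpath1 hm).symm
            have g02 : G.Adj x v2 := toG _ _ hx2 n02
            have g03 : G.Adj x v3 := toG _ _ hx3 n03
            have g13 : G.Adj v1 v3 := toG _ _ h13 n13
            cases q3 with
            | nil =>
              -- length 3: y = v3
              have hv1B : v1 ∈ B := hint v1 ⟨by simp [hQ], fun he => hx1 he.symm, h13⟩
              have hv2B : v2 ∈ B := hint v2 ⟨by simp [hQ], fun he => hx2 he.symm, h23⟩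
              obtain ⟨hne12, hnadj12⟩ := (G.compl_adj v1 v2).1 h2
              obtain ⟨b, hbB, hb1, hb2⟩ := BSP.common_nbr hBc hB hv1B hv2B hnadj12
              have c1 : C x = C v1 := BSP.fin2_ne_ne (C.valid g03) (C.valid g13)
              have c2 : C v1 = C v2 := BSP.fin2_ne_ne (C.valid hb1) (C.valid hb2)
              exact C.valid g02 (c1.trans c2)
            | @cons _ v4 _ h4 q4 =>
              have hv4 : v4 ∈ (SimpleGraph.Walk.cons h4 q4).support := by
                simp [SimpleGraph.Walk.support_cons]
              have hx4 : x ≠ v4 := fun he => hxq3 (he ▸ hv4)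
              have h14 : v1 ≠ v4 := fun he => h1q3 (he ▸ hv4)
              have h24 : v2 ≠ v4 := fun he => h2q3 (he ▸ hv4)
              have h34 : v3 ≠ v4 := by
                intro he
                exact ((SimpleGraph.Walk.cons_isPath_iff _ _).1
                  ((SimpleGraph.Walk.cons_isPath_iff _ _).1 hpath2).1).2
                  (he ▸ q4.start_mem_support)
              have hv4Q : v4 ∈ Q.support := by
                simp [hQ, SimpleGraph.Walk.support_cons]
              have n04 : ¬ Gᶜ.Adj x v4 := by
                intro had
                have hm := hind x (by simp [hQ]) v4 hv4Q had
                exact h14 (BSP.edge_from_fst h1 _ hpath hm).symm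
              have n24 : ¬ Gᶜ.Adj v2 v4 := by
                intro had
                have hm := hind v2 (by simp [hQ]) v4 hv4Q had
                rw [hQ, SimpleGraph.Walk.edges_cons, List.mem_cons] at hm
                rcases hm with hm | hm
                · rw [Sym2.eq_iff] at hm
                  rcases hm with ⟨ha, hb⟩ | ⟨ha, hb⟩
                  · exact hx2 ha.symm
                  · exact hx4 hb.symm
                · rw [SimpleGraph.Walk.edges_cons, List.mem_cons] at hm
                  rcases hm with hm | hm
                  · rw [Sym2.eq_iff] at hm
                    rcases hm with ⟨ha, hb⟩ | ⟨ha, hb⟩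
                    · exact h12 ha.symm
                    · exact h14 hb.symm
                  · exact h34 (BSP.edge_from_fst h3' _ hpath2 hm).symm
              have g04 : G.Adj x v4 := toG _ _ hx4 n04
              have g24 : G.Adj v2 v4 := toG _ _ h24 n24
              exact BSP.fin2_triangle_free C g02 g24 g04
  · exact fun h => h.1
end

section
/- Let G be the line graph of a bipartite graph and let (A,B) be a skew partition of G. Then the skew cutset B is either a star (contains a vertex adjacent to all other vertices of B) or B induces a 4-cycle (square). -/
open SimpleGraph

universe u

namespace BSP

lemma sym2_three_mem {W : Type*} (z : Sym2 W) {v1 v2 v3 : W}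
    (h1 : v1 ∈ z) (h2 : v2 ∈ z) (h3 : v3 ∈ z) : v1 = v2 ∨ v1 = v3 ∨ v2 = v3 := by
  induction z using Sym2.ind with
  | _ a b =>
    rw [Sym2.mem_iff] at h1 h2 h3
    rcases h1 with rfl | rfl <;> rcases h2 with rfl | rfl <;> rcases h3 with rfl | rfl <;> tauto

lemma lg_nocommon {V : Type u} {W : Type u} {G : SimpleGraph V} {H : SimpleGraph W}
    (φ : G ≃g H.lineGraph) {u v : V} (hn : ¬ G.Adj u v) (hne : u ≠ v) (w : W)
    (hw : w ∈ (↑(φ u) : Sym2 W) ∧ w ∈ (↑(φ v) : Sym2 W)) : False := by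
  apply hn
  rw [← φ.map_adj_iff, SimpleGraph.lineGraph_adj_iff_exists]
  exact ⟨fun h => hne (φ.injective h), w, hw⟩

lemma lg_common {V : Type u} {W : Type u} {G : SimpleGraph V} {H : SimpleGraph W}
    (φ : G ≃g H.lineGraph) {u v : V} (ha : G.Adj u v) :
    ∃ w : W, w ∈ (↑(φ u) : Sym2 W) ∧ w ∈ (↑(φ v) : Sym2 W) := by
  rw [← φ.map_adj_iff, SimpleGraph.lineGraph_adj_iff_exists] at ha
  exact ha.2

lemma lg_claw {V : Type u} {G : SimpleGraph V} (hline : IsLineGraphOfBipartite G)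
    (x y1 y2 y3 : V) (h12 : y1 ≠ y2) (h13 : y1 ≠ y3) (h23 : y2 ≠ y3)
    (a1 : G.Adj x y1) (a2 : G.Adj x y2) (a3 : G.Adj x y3)
    (n12 : ¬ G.Adj y1 y2) (n13 : ¬ G.Adj y1 y3) (n23 : ¬ G.Adj y2 y3) : False := by
  obtain ⟨W, H, _, ⟨φ⟩⟩ := hline
  obtain ⟨w1, hw1x, hw1⟩ := lg_common φ a1
  obtain ⟨w2, hw2x, hw2⟩ := lg_common φ a2
  obtain ⟨w3, hw3x, hw3⟩ := lg_common φ a3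
  rcases sym2_three_mem (↑(φ x) : Sym2 W) hw1x hw2x hw3x with h | h | h
  · exact lg_nocommon φ n12 h12 w1 ⟨hw1, h ▸ hw2⟩
  · exact lg_nocommon φ n13 h13 w1 ⟨hw1, h ▸ hw3⟩
  · exact lg_nocommon φ n23 h23 w2 ⟨hw2, h ▸ hw3⟩

lemma lg_diamond {V : Type u} {G : SimpleGraph V} (hline : IsLineGraphOfBipartite G)
    (x1 x2 y z : V) (hx : x1 ≠ x2) (hyz : y ≠ z) (n12 : ¬ G.Adj x1 x2)
    (ayz : G.Adj y z) (a1y : G.Adj x1 y) (a1z : G.Adj x1 z)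
    (a2y : G.Adj x2 y) (a2z : G.Adj x2 z) : False := by
  obtain ⟨W, H, hcol, ⟨φ⟩⟩ := hline
  classical
  have htf : ∀ a b c : W, H.Adj a b → H.Adj a c → H.Adj b c → False := by
    intro a b c hab hac hbc
    exact (hcol.cliqueFree (by norm_num)) {a, b, c}
      (SimpleGraph.is3Clique_triple_iff.2 ⟨hab, hac, hbc⟩)
  have common : ∀ {p q r : V}, G.Adj p q → G.Adj p r → G.Adj q r →
      ∃ w : W, w ∈ (↑(φ p) : Sym2 W) ∧ w ∈ (↑(φ q) : Sym2 W) ∧ w ∈ (↑(φ r) : Sym2 W) := by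
    intro p q r hpq hpr hqr
    obtain ⟨a, hae, haf⟩ := lg_common φ hpq
    obtain ⟨b, hbe, hbg⟩ := lg_common φ hpr
    obtain ⟨c, hcf, hcg⟩ := lg_common φ hqr
    by_cases hab : a = b
    · exact ⟨a, hae, haf, hab ▸ hbg⟩
    by_cases hag : a ∈ (↑(φ r) : Sym2 W)
    · exact ⟨a, hae, haf, hag⟩
    by_cases hbf : b ∈ (↑(φ q) : Sym2 W)
    · exact ⟨b, hbe, hbf, hbg⟩
    by_cases hce : c ∈ (↑(φ p) : Sym2 W)
    · exact ⟨c, hce, hcf, hcg⟩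
    exfalso
    have hca : c ≠ a := fun h => hag (h ▸ hcg)
    have hcb : c ≠ b := fun h => hbf (h ▸ hcf)
    have he : (↑(φ p) : Sym2 W) = s(a, b) := (Sym2.mem_and_mem_iff hab).1 ⟨hae, hbe⟩
    have hf : (↑(φ q) : Sym2 W) = s(a, c) := (Sym2.mem_and_mem_iff (Ne.symm hca)).1 ⟨haf, hcf⟩
    have hg : (↑(φ r) : Sym2 W) = s(b, c) := (Sym2.mem_and_mem_iff (Ne.symm hcb)).1 ⟨hbg, hcg⟩
    have ep := (φ p).2
    have eq' := (φ q).2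
    have er := (φ r).2
    rw [he, SimpleGraph.mem_edgeSet] at ep
    rw [hf, SimpleGraph.mem_edgeSet] at eq'
    rw [hg, SimpleGraph.mem_edgeSet] at er
    exact htf a b c ep eq' er
  obtain ⟨v, hv1, hvf, hvg⟩ := common a1y a1z ayz
  obtain ⟨w, hw2, hwf, hwg⟩ := common a2y a2z ayz
  have hvw : v ≠ w := by
    rintro rfl
    exact lg_nocommon φ n12 hx v ⟨hv1, hw2⟩
  have hF : (↑(φ y) : Sym2 W) = s(v, w) := (Sym2.mem_and_mem_iff hvw).1 ⟨hvf, hwf⟩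
  have hG : (↑(φ z) : Sym2 W) = s(v, w) := (Sym2.mem_and_mem_iff hvw).1 ⟨hvg, hwg⟩
  exact (φ.injective.ne hyz) (Subtype.ext (hF.trans hG.symm))

lemma star_or_square_aux {V : Type u} {G : SimpleGraph V}
    (hclaw : ∀ x y1 y2 y3 : V, y1 ≠ y2 → y1 ≠ y3 → y2 ≠ y3 →
      G.Adj x y1 → G.Adj x y2 → G.Adj x y3 →
      ¬ G.Adj y1 y2 → ¬ G.Adj y1 y3 → ¬ G.Adj y2 y3 → False)
    (hdiam : ∀ x1 x2 y z : V, x1 ≠ x2 → y ≠ z → ¬ G.Adj x1 x2 → G.Adj y z →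
      G.Adj x1 y → G.Adj x1 z → G.Adj x2 y → G.Adj x2 z → False)
    {B B1 B2 : Set V} (hd : Disjoint B1 B2) (hu : B1 ∪ B2 = B)
    (h2 : B2.Nonempty)
    (hcross : ∀ b1 ∈ B1, ∀ b2 ∈ B2, G.Adj b1 b2)
    {b1 b1' : V} (hb1 : b1 ∈ B1) (hb1' : b1' ∈ B1) (hne1 : b1 ≠ b1')
    (hnadj1 : ¬ G.Adj b1 b1') :
    IsStar G B ∨ Nonempty ((G.induce B) ≃g SimpleGraph.cycleGraph 4) := by
  have hind2 : ∀ b ∈ B2, ∀ b' ∈ B2, ¬ G.Adj b b' := by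
    intro b hb b' hb' hadj
    exact hdiam b1 b1' b b' hne1 hadj.ne hnadj1 hadj
      (hcross _ hb1 _ hb) (hcross _ hb1 _ hb') (hcross _ hb1' _ hb) (hcross _ hb1' _ hb')
  obtain ⟨b2, hb2⟩ := h2
  by_cases hsing : ∀ y ∈ B2, y = b2
  · left
    refine ⟨b2, by rw [← hu]; exact Or.inr hb2, ?_⟩
    intro y hy hyne
    rw [← hu] at hy
    rcases hy with hy | hy
    · exact (hcross _ hy _ hb2).symm
    · exact absurd (hsing y hy) hyne
  push_neg at hsing
  obtain ⟨b2', hb2', hne2⟩ := hsing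
  have hnadj2 : ¬ G.Adj b2 b2' := hind2 _ hb2 _ hb2'
  have hind1 : ∀ b ∈ B1, ∀ b' ∈ B1, ¬ G.Adj b b' := by
    intro b hb b' hb' hadj
    exact hdiam b2 b2' b b' (Ne.symm hne2) hadj.ne hnadj2 hadj
      (hcross _ hb _ hb2).symm (hcross _ hb' _ hb2).symm
      (hcross _ hb _ hb2').symm (hcross _ hb' _ hb2').symm
  have hB1eq : ∀ y ∈ B1, y = b1 ∨ y = b1' := by
    intro y hy
    by_contra hcon
    push_neg at hcon
    exact hclaw b2 b1 b1' y hne1 (Ne.symm hcon.1) (Ne.symm hcon.2)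
      (hcross _ hb1 _ hb2).symm (hcross _ hb1' _ hb2).symm (hcross _ hy _ hb2).symm
      (hind1 _ hb1 _ hb1') (hind1 _ hb1 _ hy) (hind1 _ hb1' _ hy)
  have hB2eq : ∀ y ∈ B2, y = b2 ∨ y = b2' := by
    intro y hy
    by_contra hcon
    push_neg at hcon
    exact hclaw b1 b2 b2' y (Ne.symm hne2) (Ne.symm hcon.1) (Ne.symm hcon.2)
      (hcross _ hb1 _ hb2) (hcross _ hb1 _ hb2') (hcross _ hb1 _ hy)
      (hind2 _ hb2 _ hb2') (hind2 _ hb2 _ hy) (hind2 _ hb2' _ hy)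
  right
  have hb1n2 : b1 ∉ B2 := Set.disjoint_left.1 hd hb1
  have hb1'n2 : b1' ∉ B2 := Set.disjoint_left.1 hd hb1'
  have d12 : b1 ≠ b2 := fun h => hb1n2 (h ▸ hb2)
  have d12' : b1 ≠ b2' := fun h => hb1n2 (h ▸ hb2')
  have d1'2 : b1' ≠ b2 := fun h => hb1'n2 (h ▸ hb2)
  have d1'2' : b1' ≠ b2' := fun h => hb1'n2 (h ▸ hb2')
  have hne2' : b2 ≠ b2' := fun h => hne2 h.symm
  have hb1B : b1 ∈ B := by rw [← hu]; exact Or.inl hb1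
  have hb1'B : b1' ∈ B := by rw [← hu]; exact Or.inl hb1'
  have hb2B : b2 ∈ B := by rw [← hu]; exact Or.inr hb2
  have hb2'B : b2' ∈ B := by rw [← hu]; exact Or.inr hb2'
  let f : Fin 4 → ↥B := ![⟨b1, hb1B⟩, ⟨b2, hb2B⟩, ⟨b1', hb1'B⟩, ⟨b2', hb2'B⟩]
  have hbij : Function.Bijective f := by
    constructor
    · intro i j hij
      fin_cases i <;> fin_cases j <;>
        first
          | rfl
          | exact absurd (congrArg Subtype.val hij) hne1
          | exact absurd (congrArg Subtype.val hij) hne1.symm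
          | exact absurd (congrArg Subtype.val hij) hne2'
          | exact absurd (congrArg Subtype.val hij) hne2'.symm
          | exact absurd (congrArg Subtype.val hij) d12
          | exact absurd (congrArg Subtype.val hij) d12.symm
          | exact absurd (congrArg Subtype.val hij) d12'
          | exact absurd (congrArg Subtype.val hij) d12'.symm
          | exact absurd (congrArg Subtype.val hij) d1'2
          | exact absurd (congrArg Subtype.val hij) d1'2.symm
          | exact absurd (congrArg Subtype.val hij) d1'2'
          | exact absurd (congrArg Subtype.val hij) d1'2'.symm
    · rintro ⟨y, hy⟩
      rw [← hu] at hy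
      rcases hy with hy | hy
      · rcases hB1eq y hy with rfl | rfl
        · exact ⟨0, rfl⟩
        · exact ⟨2, rfl⟩
      · rcases hB2eq y hy with rfl | rfl
        · exact ⟨1, rfl⟩
        · exact ⟨3, rfl⟩
  have c01 := hcross _ hb1 _ hb2
  have c0'1 := hcross _ hb1' _ hb2
  have c01' := hcross _ hb1 _ hb2'
  have c0'1' := hcross _ hb1' _ hb2'
  have hmap : ∀ i j : Fin 4,
      (G.induce B).Adj (f i) (f j) ↔ (SimpleGraph.cycleGraph 4).Adj i j := by
    intro i j
    fin_cases i <;> fin_cases j <;>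
      first
        | exact iff_of_true c01 (by decide)
        | exact iff_of_true c01.symm (by decide)
        | exact iff_of_true c0'1 (by decide)
        | exact iff_of_true c0'1.symm (by decide)
        | exact iff_of_true c01' (by decide)
        | exact iff_of_true c01'.symm (by decide)
        | exact iff_of_true c0'1' (by decide)
        | exact iff_of_true c0'1'.symm (by decide)
        | exact iff_of_false G.irrefl (by decide)
        | exact iff_of_false hnadj1 (by decide)
        | exact iff_of_false (fun h => hnadj1 h.symm) (by decide)
        | exact iff_of_false hnadj2 (by decide)
        | exact iff_of_false (fun h => hnadj2 h.symm) (by decide)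
  exact ⟨(SimpleGraph.Iso.symm ⟨Equiv.ofBijective f hbij, hmap _ _⟩ : _)⟩

end BSP


/-- In the line graph of a bipartite graph, every skew cutset is a star or
induces a square. -/
theorem line_graph_skew_cutset_star_or_square {V : Type u} (G : SimpleGraph V)
    (hline : BSP.IsLineGraphOfBipartite G) (A B : Set V)
    (hsp : BSP.IsSkewPartition G A B) :
    BSP.IsStar G B ∨ Nonempty ((G.induce B) ≃g SimpleGraph.cycleGraph 4) := by
  obtain ⟨-, hBne, -, -, -, hBnc⟩ := hsp
  have hpc : ¬ ((Gᶜ).induce B).Preconnected := by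
    intro h
    haveI := hBne.to_subtype
    exact hBnc ⟨h⟩
  have hpc2 : ¬ ∀ u v : (B : Set V), ((Gᶜ).induce B).Reachable u v := hpc
  push_neg at hpc2
  obtain ⟨u, v, huv⟩ := hpc2
  set B1 : Set V := {b | ∃ hb : b ∈ B, ((Gᶜ).induce B).Reachable u ⟨b, hb⟩} with hB1def
  have hsub1 : B1 ⊆ B := fun b hb => hb.1
  have hcross : ∀ c ∈ B1, ∀ d ∈ B \ B1, G.Adj c d := by
    rintro c ⟨hcB, hcr⟩ d ⟨hdB, hdn⟩
    by_contra hna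
    have hcd : c ≠ d := by
      rintro rfl
      exact hdn ⟨hdB, hcr⟩
    have hadj : ((Gᶜ).induce B).Adj ⟨c, hcB⟩ ⟨d, hdB⟩ := ⟨hcd, hna⟩
    exact hdn ⟨hdB, hcr.trans hadj.reachable⟩
  have hu1 : (u : V) ∈ B1 := ⟨u.2, by exact SimpleGraph.Reachable.refl u⟩
  have hv2 : (v : V) ∈ B \ B1 := ⟨v.2, by rintro ⟨hb, hr⟩; exact huv hr⟩
  have hdisj : Disjoint B1 (B \ B1) := Set.disjoint_sdiff_right
  have hunion : B1 ∪ (B \ B1) = B := Set.union_diff_cancel hsub1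
  have hclaw := BSP.lg_claw hline
  have hdiam := BSP.lg_diamond hline
  by_cases hc1 : ∀ b ∈ B1, ∀ b' ∈ B1, b ≠ b' → G.Adj b b'
  · by_cases hc2 : ∀ b ∈ B \ B1, ∀ b' ∈ B \ B1, b ≠ b' → G.Adj b b'
    · left
      refine ⟨(u : V), u.2, fun y hy hyne => ?_⟩
      rw [← hunion] at hy
      rcases hy with hy | hy
      · exact hc1 _ hu1 _ hy (Ne.symm hyne)
      · exact hcross _ hu1 _ hy
    · push_neg at hc2
      obtain ⟨c, hc, c', hc', hcne, hcnadj⟩ := hc2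
      exact BSP.star_or_square_aux hclaw hdiam hdisj.symm
        (by rw [Set.union_comm]; exact hunion) ⟨(u : V), hu1⟩
        (fun a ha b hb => (hcross _ hb _ ha).symm) hc hc' hcne hcnadj
  · push_neg at hc1
    obtain ⟨c, hc, c', hc', hcne, hcnadj⟩ := hc1
    exact BSP.star_or_square_aux hclaw hdiam hdisj hunion ⟨(v : V), hv2⟩
      hcross hc hc' hcne hcnadj
end

section
/- Let G be a Berge graph with a 2-join (X1,X2) with split (X1,X2,A1,B1,A2,B2), and let Q be an induced antipath of G of length at least 5 whose interior vertices all lie in A1 ∪ X2 and whose end-vertices are not in A1. Then either Q has even length, or there exists a vertex a ∈ A1 ∪ B1 such that V(Q) ⊆ X2 ∪ {a}. -/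
open SimpleGraph

universe u

section BSPaux

open SimpleGraph

variable {V : Type*} {G : SimpleGraph V}

lemma BSPaux.mem_support_getVert {u v : V} (p : G.Walk u v) (i : ℕ) :
    p.getVert i ∈ p.support :=
  Walk.mem_support_iff_exists_getVert.mpr ⟨min i p.length, by
    rcases le_total i p.length with h | h
    · simp [min_eq_left h, h]
    · simp [min_eq_right h, Walk.getVert_of_length_le _ h, Walk.getVert_length]⟩

lemma BSPaux.getVert_inj {u v : V} {p : G.Walk u v} (hp : p.IsPath) :
    ∀ i, i ≤ p.length → ∀ j, j ≤ p.length → p.getVert i = p.getVert j → i = j := by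
  induction p with
  | nil => intro i hi j hj _; simp at hi hj; omega
  | cons h p ih =>
    rw [SimpleGraph.Walk.cons_isPath_iff] at hp
    intro i hi j hj hij
    match i, j with
    | 0, 0 => rfl
    | 0, (j+1) =>
      exfalso
      rw [Walk.getVert_zero, Walk.getVert_cons_succ] at hij
      exact hp.2 (hij ▸ BSPaux.mem_support_getVert p j)
    | (i+1), 0 =>
      exfalso
      rw [Walk.getVert_zero, Walk.getVert_cons_succ] at hij
      exact hp.2 (hij ▸ BSPaux.mem_support_getVert p i)
    | (i+1), (j+1) =>
      rw [Walk.length_cons] at hi hj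
      rw [Walk.getVert_cons_succ, Walk.getVert_cons_succ] at hij
      exact congrArg Nat.succ (ih hp.1 i (by omega) j (by omega) hij)

lemma BSPaux.edge_index {u v : V} (p : G.Walk u v) :
    ∀ e ∈ p.edges, ∃ i, i < p.length ∧ e = s(p.getVert i, p.getVert (i+1)) := by
  induction p with
  | nil => simp
  | cons h p ih =>
    intro e he
    rw [Walk.edges_cons] at he
    rcases List.mem_cons.1 he with rfl | he
    · exact ⟨0, by simp, by simp [Walk.getVert_zero, Walk.getVert_cons_succ]⟩
    · obtain ⟨i, hi, rfl⟩ := ih e he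
      exact ⟨i+1, by simp; omega, by simp [Walk.getVert_cons_succ]⟩

end BSPaux


/-- An antipath of length at least 5 with interior in `A1 ∪ X2` and ends
outside `A1` is even, or lies in `X2` plus one vertex of `A1 ∪ B1`. -/
theorem antipath_with_interior_in_A1_union_X2 {V : Type*} (G : SimpleGraph V)
    (X1 X2 A1 B1 A2 B2 : Set V)
    (hBerge : BSP.Berge G)
    (hJ : BSP.IsTwoJoinSplit G X1 X2 A1 B1 A2 B2)
    (u v : V) (q : (Gᶜ).Walk u v) (hq : BSP.IsInducedPath Gᶜ q)
    (hlen : 5 ≤ q.length)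
    (hint : ∀ x, BSP.Interior q x → x ∈ A1 ∪ X2)
    (hu : u ∉ A1) (hv : v ∉ A1) :
    Even q.length ∨ ∃ a ∈ A1 ∪ B1, ∀ x ∈ q.support, x ∈ X2 ∪ {a} := by
  classical
  obtain ⟨hd12, hu12, hA1s, hB1s, hA2s, hB2s, hdAB1, hdAB2, hA1n, hB1n, hA2n, hB2n,
    hAA, hBB, hcross⟩ := hJ
  obtain ⟨hp, hind⟩ := hq
  set n := q.length with hn
  set Q : ℕ → V := q.getVert with hQdef
  have hQ0 : Q 0 = u := Walk.getVert_zero q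
  have hQn : Q n = v := Walk.getVert_length q
  have hmem : ∀ i, Q i ∈ q.support := fun i => BSPaux.mem_support_getVert q i
  have hinj : ∀ i, i ≤ n → ∀ j, j ≤ n → Q i = Q j → i = j := BSPaux.getVert_inj hp
  have hne : ∀ i, i ≤ n → ∀ j, j ≤ n → i ≠ j → Q i ≠ Q j :=
    fun i hi j hj hij h => hij (hinj i hi j hj h)
  have hstep : ∀ i, i < n → ¬ G.Adj (Q i) (Q (i+1)) := by
    intro i hi
    exact ((compl_adj G _ _).1 (q.adj_getVert_succ hi)).2
  have hfar : ∀ i j, i + 2 ≤ j → j ≤ n → G.Adj (Q i) (Q j) := by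
    intro i j hij hj
    by_contra hnadj
    have hadj : (Gᶜ).Adj (Q i) (Q j) := by
      rw [compl_adj]; exact ⟨hne i (by omega) j hj (by omega), hnadj⟩
    have hme := hind _ (hmem i) _ (hmem j) hadj
    obtain ⟨m, hm, he⟩ := BSPaux.edge_index q _ hme
    rw [Sym2.eq_iff] at he
    rcases he with ⟨h1, h2⟩ | ⟨h1, h2⟩
    · have e1 := hinj i (by omega) m (by omega) h1
      have e2 := hinj j hj (m+1) (by omega) h2
      omega
    · have e1 := hinj i (by omega) (m+1) (by omega) h1
      have e2 := hinj j hj m (by omega) h2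
      omega
  have hX : ∀ x : V, x ∈ X1 → x ∈ X2 → False :=
    fun x h1 h2 => Set.disjoint_left.1 hd12 h1 h2
  have hXall : ∀ x : V, x ∈ X1 ∨ x ∈ X2 := by
    intro x
    have : x ∈ X1 ∪ X2 := hu12 ▸ Set.mem_univ x
    exact this
  have hdj : ∀ x, x ∈ A1 → x ∈ B1 → False := fun x h1 h2 => Set.disjoint_left.1 hdAB1 h1 h2
  have hdj2 : ∀ x, x ∈ A2 → x ∈ B2 → False := fun x h1 h2 => Set.disjoint_left.1 hdAB2 h1 h2
  have hintm : ∀ m, 1 ≤ m → m + 1 ≤ n → Q m ∈ A1 ∪ X2 := by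
    intro m h1 h2
    refine hint _ ⟨hmem m, ?_, ?_⟩
    · rw [← hQ0]; exact hne m (by omega) 0 (by omega) (by omega)
    · rw [← hQn]; exact hne m (by omega) n (by omega) (by omega)
  have hintA1 : ∀ m, 1 ≤ m → m + 1 ≤ n → Q m ∈ X1 → Q m ∈ A1 := by
    intro m h1 h2 hx1
    rcases hintm m h1 h2 with h | h
    · exact h
    · exact (hX _ hx1 h).elim
  have hF1a : ∀ i j, i ≤ n → j ≤ n → (i + 1 = j ∨ j + 1 = i) → Q i ∈ A1 → Q j ∉ A2 := by
    intro i j hi hj hc hA hA2m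
    have hadj : G.Adj (Q i) (Q j) := hAA _ hA _ hA2m
    rcases hc with h | h
    · exact hstep i (by omega) (h ▸ hadj)
    · exact hstep j (by omega) (by rw [h]; exact hadj.symm)
  have hF1b : ∀ i j, i ≤ n → j ≤ n → (i + 2 ≤ j ∨ j + 2 ≤ i) → Q i ∈ A1 → Q j ∈ X2 →
      Q j ∈ A2 := by
    intro i j hi hj hc hA hX2j
    have hadj : G.Adj (Q i) (Q j) := by
      rcases hc with h | h
      · exact hfar i j h hj
      · exact (hfar j i h hi).symm
    rcases hcross _ (hA1s hA) _ hX2j hadj with ⟨_, h2⟩ | ⟨h1, _⟩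
    · exact h2
    · exact (hdj _ hA h1).elim
  have hF2 : ∀ m, 2 ≤ m → m ≤ n → Q 0 ∈ X1 → Q m ∈ X2 → Q 0 ∈ B1 ∧ Q m ∈ B2 := by
    intro m h2 hmn h0 hX2m
    have hadj : G.Adj (Q 0) (Q m) := hfar 0 m (by omega) hmn
    rcases hcross _ h0 _ hX2m hadj with ⟨h1, _⟩ | ⟨h1, h2'⟩
    · exact absurd (hQ0 ▸ h1) hu
    · exact ⟨h1, h2'⟩
  have hF2' : ∀ m, m + 2 ≤ n → Q n ∈ X1 → Q m ∈ X2 → Q n ∈ B1 ∧ Q m ∈ B2 := by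
    intro m hmn hn' hX2m
    have hadj : G.Adj (Q n) (Q m) := (hfar m n hmn le_rfl).symm
    rcases hcross _ hn' _ hX2m hadj with ⟨h1, _⟩ | ⟨h1, h2'⟩
    · exact absurd (hQn ▸ h1) hv
    · exact ⟨h1, h2'⟩
  have hmix : ∀ i i' j, i ≤ n → i' ≤ n → j ≤ n → (i + 1 = j ∨ j + 1 = i) →
      (i' + 2 ≤ j ∨ j + 2 ≤ i') → Q i ∈ A1 → Q i' ∈ A1 → Q j ∈ X2 → False := by
    intro i i' j hi hi' hj hnear hfar' hA hA' hX2j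
    exact hF1a i j hi hj hnear hA (hF1b i' j hi' hj hfar' hA' hX2j)
  rcases Nat.even_or_odd n with he | ho
  · exact Or.inl he
  refine Or.inr ?_
  by_cases hpair : ∃ s t, s < t ∧ t ≤ n ∧ Q s ∈ X1 ∧ Q t ∈ X1
  · exfalso
    obtain ⟨s, t, hst, htn, hsX1, htX1⟩ := hpair
    by_cases hcons : ∃ c, 1 ≤ c ∧ c + 2 ≤ n ∧ Q c ∈ A1 ∧ Q (c+1) ∈ A1
    · -- Claim A: all of Q lies in X1, interior in A1; build an odd antihole
      obtain ⟨c, hc1, hc2, hcA, hcA'⟩ := hcons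
      have hdown : ∀ d, d ≤ c - 1 → Q (c - d) ∈ A1 ∧ Q (c - d + 1) ∈ A1 := by
        intro d
        induction d with
        | zero => intro _; exact ⟨by simpa using hcA, by simpa using hcA'⟩
        | succ d ih =>
          intro hd
          obtain ⟨h1, h2⟩ := ih (by omega)
          have hA1m : Q (c - d - 1) ∈ A1 := by
            rcases hintm (c - d - 1) (by omega) (by omega) with h | h
            · exact h
            · exact (hmix (c-d) (c-d+1) (c-d-1) (by omega) (by omega) (by omega)
                (Or.inr (by omega)) (Or.inr (by omega)) h1 h2 h).elim
          constructor
          · have hee : c - (d+1) = c - d - 1 := by omega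
            rw [hee]; exact hA1m
          · have hee : c - (d+1) + 1 = c - d := by omega
            rw [hee]; exact h1
      have hup : ∀ d, c + 1 + d + 1 ≤ n → Q (c + d) ∈ A1 ∧ Q (c + 1 + d) ∈ A1 := by
        intro d
        induction d with
        | zero => intro _; exact ⟨by simpa using hcA, by simpa using hcA'⟩
        | succ d ih =>
          intro hd
          obtain ⟨h1, h2⟩ := ih (by omega)
          have hA1m : Q (c + 1 + d + 1) ∈ A1 := by
            rcases hintm (c + 1 + d + 1) (by omega) (by omega) with h | h
            · exact h
            · exact (hmix (c+1+d) (c+d) (c+1+d+1) (by omega) (by omega) (by omega)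
                (Or.inl rfl) (Or.inl (by omega)) h2 h1 h).elim
          constructor
          · have hee : c + (d+1) = c + 1 + d := by omega
            rw [hee]; exact h2
          · have hee : c + 1 + (d+1) = c + 1 + d + 1 := by omega
            rw [hee]; exact hA1m
      have hchain : ∀ m, 1 ≤ m → m + 1 ≤ n → Q m ∈ A1 := by
        intro m hm1 hmn
        rcases le_or_gt m c with h | h
        · have h' := (hdown (c - m) (by omega)).1
          have hee : c - (c - m) = m := by omega
          rwa [hee] at h'
        · have h' := (hup (m - (c+1)) (by omega)).2
          have hee : c + 1 + (m - (c+1)) = m := by omega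
          rwa [hee] at h'
      have h0X1 : Q 0 ∈ X1 := by
        rcases hXall (Q 0) with h | h
        · exact h
        · exact (hmix 1 2 0 (by omega) (by omega) (by omega) (Or.inr rfl)
            (Or.inr (by omega)) (hchain 1 (by omega) (by omega))
            (hchain 2 (by omega) (by omega)) h).elim
      have hnX1 : Q n ∈ X1 := by
        rcases hXall (Q n) with h | h
        · exact h
        · exact (hmix (n-1) (n-2) n (by omega) (by omega) (by omega) (Or.inl (by omega))
            (Or.inl (by omega)) (hchain (n-1) (by omega) (by omega))
            (hchain (n-2) (by omega) (by omega)) h).elim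
      obtain ⟨a2, ha2⟩ := hA2n
      have ha2X2 : a2 ∈ X2 := hA2s ha2
      have hsuppX1 : ∀ x ∈ q.support, x ∈ X1 := by
        intro x hx
        obtain ⟨m, hgm, hmn⟩ := Walk.mem_support_iff_exists_getVert.1 hx
        have hgm' : Q m = x := hgm
        subst hgm'
        rcases Nat.eq_zero_or_pos m with rfl | hm
        · exact h0X1
        rcases Nat.lt_or_ge m n with h | h
        · exact hA1s (hchain m (by omega) (by omega))
        · have : m = n := le_antisymm hmn h
          rw [this]; exact hnX1
      have ha2nsupp : a2 ∉ q.support := fun h => hX a2 (hsuppX1 a2 h) ha2X2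
      have hadj_ends : ∀ m, m ≤ n → Q m ∈ X1 → Q m ∉ A1 → ¬ G.Adj (Q m) a2 := by
        intro m hm hmX1 hmA1 hadj
        rcases hcross _ hmX1 _ ha2X2 hadj with ⟨h1, _⟩ | ⟨_, h2⟩
        · exact hmA1 h1
        · exact hdj2 _ ha2 h2
      have hu' : ¬ G.Adj (Q 0) a2 := hadj_ends 0 (by omega) h0X1 (by rw [hQ0]; exact hu)
      have hv' : ¬ G.Adj (Q n) a2 := hadj_ends n le_rfl hnX1 (by rw [hQn]; exact hv)
      have huX1 : u ∈ X1 := hQ0 ▸ h0X1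
      have hvX1 : v ∈ X1 := hQn ▸ hnX1
      have hau : a2 ≠ u := fun h => hX u huX1 (h ▸ ha2X2)
      have hav : a2 ≠ v := fun h => hX v hvX1 (h ▸ ha2X2)
      have h1 : (Gᶜ).Adj a2 u := by
        rw [compl_adj]
        exact ⟨hau, fun h => hu' (by rw [hQ0]; exact h.symm)⟩
      have h2 : (Gᶜ).Adj v a2 := by
        rw [compl_adj]
        exact ⟨hav.symm, fun h => hv' (by rw [hQn]; exact h)⟩
      let r : (Gᶜ).Walk v a2 := Walk.cons h2 Walk.nil
      let cw : (Gᶜ).Walk a2 a2 := Walk.cons h1 (q.append r)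
      have huv : u ≠ v := by
        rw [← hQ0, ← hQn]; exact hne 0 (by omega) n le_rfl (by omega)
      have hvsupp : v ∈ q.support := q.end_mem_support
      have hlen2 : cw.length = n + 2 := by
        simp only [cw, r, Walk.length_cons, Walk.length_append, Walk.length_nil]
        omega
      have hsupp : cw.support = a2 :: (q.support ++ [a2]) := by
        simp [cw, r, Walk.support_append]
      have hedges : cw.edges = s(a2, u) :: (q.edges ++ [s(v, a2)]) := by
        simp [cw, r, Walk.edges_append]
      have hcyc : cw.IsCycle := by
        refine ⟨⟨⟨?_⟩, ?_⟩, ?_⟩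
        · rw [hedges]
          rw [List.nodup_cons, List.nodup_append]
          refine ⟨?_, hp.isTrail.edges_nodup, List.nodup_singleton _, ?_⟩
          · intro hmem'
            rcases List.mem_append.1 hmem' with h | h
            · exact ha2nsupp (q.fst_mem_support_of_mem_edges h)
            · rw [List.mem_singleton, Sym2.eq_iff] at h
              rcases h with ⟨ha, hb⟩ | ⟨ha, hb⟩
              · exact hav ha
              · exact huv hb
          · intro e he
            intro b hb
            rw [List.mem_singleton] at hb
            subst hb
            intro hee
            subst hee
            exact ha2nsupp (q.snd_mem_support_of_mem_edges he)
        · simp [cw]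
        · have htail : cw.support.tail = q.support ++ [a2] := by rw [hsupp]; rfl
          rw [htail, List.nodup_append]
          refine ⟨hp.support_nodup, List.nodup_singleton _, ?_⟩
          intro x hx
          intro b hb
          rw [List.mem_singleton] at hb
          subst hb
          intro hee
          subst hee
          exact ha2nsupp hx
      have hindc : BSP.IsInducedWalk Gᶜ cw := by
        intro x hx y hy hadj
        rw [hsupp] at hx hy
        rw [hedges]
        have hxy : ∀ z, z ∈ a2 :: (q.support ++ [a2]) → z = a2 ∨ z ∈ q.support := by
          intro z hz
          simp only [List.mem_cons, List.mem_append, List.mem_singleton] at hz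
          tauto
        have hkey : ∀ z, z ∈ q.support → (Gᶜ).Adj a2 z →
            s(a2, z) ∈ s(a2, u) :: (q.edges ++ [s(v, a2)]) := by
          intro z hz hzadj
          obtain ⟨m, hgm, hmn⟩ := Walk.mem_support_iff_exists_getVert.1 hz
          have hgm' : Q m = z := hgm
          subst hgm'
          rcases Nat.eq_zero_or_pos m with rfl | hm0
          · rw [hQ0]; exact List.mem_cons_self
          rcases Nat.lt_or_ge m n with hmlt | hge
          · exfalso
            have hAm : Q m ∈ A1 := hchain m (by omega) (by omega)
            have : G.Adj (Q m) a2 := hAA _ hAm _ ha2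
            exact ((compl_adj G _ _).1 hzadj).2 this.symm
          · have hmn' : m = n := le_antisymm hmn hge
            rw [hmn', hQn]
            have hsw : s(a2, v) = s(v, a2) := Sym2.eq_swap
            rw [hsw]
            exact List.mem_cons.2 (Or.inr (List.mem_append.2 (Or.inr (List.mem_singleton.2 rfl))))
        rcases hxy x hx with hx0 | hxs
        · rcases hxy y hy with hy0 | hys
          · rw [hx0, hy0] at hadj
            exact ((Gᶜ).irrefl hadj).elim
          · rw [hx0] at hadj ⊢
            exact hkey y hys hadj
        · rcases hxy y hy with hy0 | hys
          · rw [hy0] at hadj ⊢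
            have hh := hkey x hxs hadj.symm
            have hsw : s(a2, x) = s(x, a2) := Sym2.eq_swap
            rwa [hsw] at hh
          · have hh := hind x hxs y hys hadj
            exact List.mem_cons.2 (Or.inr (List.mem_append.2 (Or.inl hh)))
      have hodd : BSP.HasOddHole Gᶜ := by
        refine ⟨a2, cw, ⟨hcyc, hindc⟩, ?_, ?_⟩
        · rw [hlen2]
          obtain ⟨k, hk⟩ := ho
          exact ⟨k + 1, by omega⟩
        · rw [hlen2]; omega
      exact hBerge.2 hodd
    · -- no two consecutive interior A1 vertices
      have hγ : ∀ i j, 1 ≤ i → i < j → j + 1 ≤ n → Q i ∈ A1 → Q j ∈ A1 → False := by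
        intro i j hi hij hjn hAi hAj
        have hij2 : i + 2 ≤ j := by
          rcases Nat.lt_or_ge (i+1) j with h | h
          · omega
          · exfalso
            have hee : j = i + 1 := by omega
            exact hcons ⟨i, hi, by omega, hAi, hee ▸ hAj⟩
        have hi1 : i = 1 := by
          by_contra h
          rcases hintm (i-1) (by omega) (by omega) with h' | h'
          · refine hcons ⟨i-1, by omega, by omega, h', ?_⟩
            have hee : i - 1 + 1 = i := by omega
            rw [hee]; exact hAi
          · exact hmix i j (i-1) (by omega) (by omega) (by omega) (Or.inr (by omega))
              (Or.inr (by omega)) hAi hAj h'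
        have hjn1 : j + 1 = n := by
          by_contra h
          rcases hintm (j+1) (by omega) (by omega) with h' | h'
          · exact hcons ⟨j, by omega, by omega, hAj, h'⟩
          · exact hmix j i (j+1) (by omega) (by omega) (by omega) (Or.inl rfl)
              (Or.inl (by omega)) hAj hAi h'
        subst hi1
        rcases hintm 2 (by omega) (by omega) with h' | h'
        · exact hcons ⟨1, le_rfl, by omega, hAi, h'⟩
        · exact hmix 1 j 2 (by omega) (by omega) (by omega) (Or.inl rfl)
            (Or.inr (by omega)) hAi hAj h'
      have halpha : Q 0 ∈ X1 → Q n ∈ X1 → False := by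
        intro h0 hn'
        rcases hintm 1 le_rfl (by omega) with h1A | h1X2
        · rcases hintm (n-1) (by omega) (by omega) with hnA | hnX2
          · exact hγ 1 (n-1) le_rfl (by omega) (by omega) h1A hnA
          · exact hdj2 _ (hF1b 1 (n-1) (by omega) (by omega) (Or.inl (by omega)) h1A hnX2)
              (hF2 (n-1) (by omega) (by omega) h0 hnX2).2
        · rcases hintm (n-1) (by omega) (by omega) with hnA | hnX2
          · exact hdj2 _ (hF1b (n-1) 1 (by omega) (by omega) (Or.inr (by omega)) hnA h1X2)
              (hF2' 1 (by omega) hn' h1X2).2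
          · have hq1B2 := (hF2' 1 (by omega) hn' h1X2).2
            have h0B1 : Q 0 ∈ B1 := by
              rcases hintm 2 (by omega) (by omega) with h2A | h2X2
              · rcases hintm 3 (by omega) (by omega) with h3A | h3X2
                · exact (hcons ⟨2, by omega, by omega, h2A, h3A⟩).elim
                · exact (hF2 3 (by omega) (by omega) h0 h3X2).1
              · exact (hF2 2 (by omega) (by omega) h0 h2X2).1
            exact hstep 0 (by omega) (hBB _ h0B1 _ hq1B2)
      have hbeta : ∀ i, 1 ≤ i → i + 1 ≤ n → Q 0 ∈ X1 → Q n ∈ X2 → Q i ∈ A1 → False := by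
        intro i hi1 hin h0 hnX2 hiA
        have hnB2 := (hF2 n (by omega) le_rfl h0 hnX2).2
        have hin1 : i + 1 = n := by
          by_contra h
          exact hdj2 _ (hF1b i n (by omega) le_rfl (Or.inl (by omega)) hiA hnX2) hnB2
        rcases hintm 2 (by omega) (by omega) with h2A | h2X2
        · exact hγ 2 i (by omega) (by omega) (by omega) h2A hiA
        · exact hdj2 _ (hF1b i 2 (by omega) (by omega) (Or.inr (by omega)) hiA h2X2)
            (hF2 2 (by omega) (by omega) h0 h2X2).2
      have hbeta' : ∀ i, 1 ≤ i → i + 1 ≤ n → Q n ∈ X1 → Q 0 ∈ X2 → Q i ∈ A1 → False := by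
        intro i hi1 hin hn' h0X2 hiA
        have h0B2 := (hF2' 0 (by omega) hn' h0X2).2
        have hi1' : i = 1 := by
          by_contra h
          exact hdj2 _ (hF1b i 0 (by omega) (by omega) (Or.inr (by omega)) hiA h0X2) h0B2
        subst hi1'
        rcases hintm (n-2) (by omega) (by omega) with h2A | h2X2
        · exact hγ 1 (n-2) le_rfl (by omega) (by omega) hiA h2A
        · exact hdj2 _ (hF1b 1 (n-2) (by omega) (by omega) (Or.inl (by omega)) hiA h2X2)
            (hF2' (n-2) (by omega) hn' h2X2).2
      rcases hXall (Q 0) with h0X1 | h0X2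
      · rcases hXall (Q n) with hnX1' | hnX2'
        · exact halpha h0X1 hnX1'
        · have hiex : ∃ i, 1 ≤ i ∧ i + 1 ≤ n ∧ Q i ∈ A1 := by
            by_cases hs0 : s = 0
            · have ht' : t ≠ n := fun h => hX _ htX1 (h ▸ hnX2')
              exact ⟨t, by omega, by omega, hintA1 t (by omega) (by omega) htX1⟩
            · exact ⟨s, by omega, by omega, hintA1 s (by omega) (by omega) hsX1⟩
          obtain ⟨i, hh1, hh2, hh3⟩ := hiex
          exact hbeta i hh1 hh2 h0X1 hnX2' hh3
      · rcases hXall (Q n) with hnX1' | hnX2'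
        · have hs' : s ≠ 0 := fun h => hX _ hsX1 (h ▸ h0X2)
          exact hbeta' s (by omega) (by omega) hnX1' h0X2
            (hintA1 s (by omega) (by omega) hsX1)
        · have hs0 : s ≠ 0 := fun h => hX _ hsX1 (h ▸ h0X2)
          have htn' : t ≠ n := fun h => hX _ htX1 (h ▸ hnX2')
          exact hγ s t (by omega) hst (by omega)
            (hintA1 s (by omega) (by omega) hsX1)
            (hintA1 t (by omega) (by omega) htX1)
  · -- at most one vertex of Q in X1
    by_cases hone : ∃ t, t ≤ n ∧ Q t ∈ X1
    · obtain ⟨t, ht, htX1⟩ := hone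
      have huniq : ∀ m, m ≤ n → m ≠ t → Q m ∈ X2 := by
        intro m hm hmt
        rcases hXall (Q m) with h | h
        · exfalso
          rcases Nat.lt_or_ge m t with h' | h'
          · exact hpair ⟨m, t, h', ht, h, htX1⟩
          · exact hpair ⟨t, m, by omega, hm, htX1, h⟩
        · exact h
      have hfin : ∀ (a : V), a = Q t → ∀ x ∈ q.support, x ∈ X2 ∪ {a} := by
        intro a ha x hx
        obtain ⟨m, hgm, hmn⟩ := Walk.mem_support_iff_exists_getVert.1 hx
        have hgm' : Q m = x := hgm
        simp only [Set.mem_union, Set.mem_singleton_iff]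
        by_cases hmt : m = t
        · right
          rw [ha, ← hgm', hmt]
        · left
          rw [← hgm']
          exact huniq m hmn hmt
      by_cases ht0 : t = 0
      · subst ht0
        have h2X2 : Q 2 ∈ X2 := huniq 2 (by omega) (by omega)
        have hB := hF2 2 le_rfl (by omega) htX1 h2X2
        exact ⟨Q 0, Set.mem_union_right _ hB.1, hfin _ rfl⟩
      · by_cases htn2 : t = n
        · subst htn2
          have h2X2 : Q (n-2) ∈ X2 := huniq (n-2) (by omega) (by omega)
          have hB := hF2' (n-2) (by omega) htX1 h2X2
          exact ⟨Q n, Set.mem_union_right _ hB.1, hfin _ rfl⟩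
        · have hA : Q t ∈ A1 := hintA1 t (by omega) (by omega) htX1
          exact ⟨Q t, Set.mem_union_left _ hA, hfin _ rfl⟩
    · obtain ⟨a, ha⟩ := hA1n
      refine ⟨a, Set.mem_union_left _ ha, ?_⟩
      intro x hx
      obtain ⟨m, hgm, hmn⟩ := Walk.mem_support_iff_exists_getVert.1 hx
      have hgm' : Q m = x := hgm
      refine Set.mem_union_left _ ?_
      rcases hXall x with h | h
      · exact (hone ⟨m, hmn, by rw [hgm']; exact h⟩).elim
      · exact h
end
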